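/- arXiv:1810.09732 — 4 statements merged into one kernel-verified Lean document; each statement's English description precedes it below -/
import Mathlib

section
/- Let A be an n×n tridiagonal matrix with diagonal entries a_1,…,a_n, superdiagonal entries b_1,…,b_{n-1} ≥ 0, and subdiagonal entries c_1,…,c_{n-1} ≥ 0. If the dominance condition a_i ≥ b_i + c_{i-1} holds for all i (with c_0 := 0 and b_n := 0), then A is totally nonnegative. -/
open scoped Classical

def TotallyNonneg {n : ℕ} (A : Matrix (Fin n) (Fin n) ℝ) : Prop :=
  ∀ (k : ℕ) (r c : Fin k → Fin n), StrictMono r → StrictMono c →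
    0 ≤ (A.submatrix r c).det

def TotallyPos {n : ℕ} (A : Matrix (Fin n) (Fin n) ℝ) : Prop :=
  ∀ (k : ℕ) (r c : Fin k → Fin n), StrictMono r → StrictMono c →
    0 < (A.submatrix r c).det

noncomputable def countSignChanges : List ℝ → ℕ
  | a :: b :: t => (if a * b < 0 then 1 else 0) + countSignChanges (b :: t)
  | _ => 0

noncomputable def sMinus {n : ℕ} (y : Fin n → ℝ) : ℕ :=
  countSignChanges ((List.ofFn y).filter (fun x => decide (x ≠ 0)))

noncomputable def sPlus {n : ℕ} (y : Fin n → ℝ) : ℕ :=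
  sSup {k | ∃ z : Fin n → ℝ,
    (∀ i, (y i ≠ 0 → z i = y i) ∧ (y i = 0 → z i = 1 ∨ z i = -1)) ∧
    countSignChanges (List.ofFn z) = k}

def MatIrreducible {n : ℕ} (A : Matrix (Fin n) (Fin n) ℝ) : Prop :=
  ∀ S : Set (Fin n), S.Nonempty → S ≠ Set.univ →
    ∃ i ∈ S, ∃ j ∉ S, A i j ≠ 0


namespace TridiagTNAux

noncomputable def cval {n : ℕ} (c : Fin n → ℝ) (m : Fin n) : ℝ :=
  if h : 0 < m.val then c ⟨m.val - 1, Nat.lt_of_le_of_lt (Nat.sub_le _ _) m.isLt⟩ else 0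

lemma cval_nonneg {n : ℕ} (c : Fin n → ℝ) (hc : ∀ i, 0 ≤ c i) (m : Fin n) :
    0 ≤ cval c m := by
  unfold cval; split_ifs
  · exact hc _
  · exact le_refl 0

lemma succAbove_one_succ {k : ℕ} (j : Fin k) :
    (1 : Fin (k+2)).succAbove j.succ = j.succ.succ := by
  apply Fin.ext
  simp [Fin.succAbove, Fin.lt_def]

lemma succAbove_one_zero {k : ℕ} : (1 : Fin (k+2)).succAbove 0 = 0 := by
  apply Fin.ext
  simp [Fin.succAbove, Fin.lt_def]

lemma det_row0_single {k : ℕ} (M : Matrix (Fin (k+1)) (Fin (k+1)) ℝ)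
    (h : ∀ j : Fin (k+1), j ≠ 0 → M 0 j = 0) :
    M.det = M 0 0 * (M.submatrix Fin.succ Fin.succ).det := by
  rw [Matrix.det_succ_row_zero, Finset.sum_eq_single 0]
  · simp [Fin.succAbove_zero]
  · intro j _ hj; rw [h j hj]; ring
  · simp

lemma det_col0_single {k : ℕ} (M : Matrix (Fin (k+1)) (Fin (k+1)) ℝ)
    (h : ∀ i : Fin (k+1), i ≠ 0 → M i 0 = 0) :
    M.det = M 0 0 * (M.submatrix Fin.succ Fin.succ).det := by
  rw [Matrix.det_succ_column_zero, Finset.sum_eq_single 0]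
  · simp [Fin.succAbove_zero]
  · intro i _ hi; rw [h i hi]; ring
  · simp

lemma det_row0_double {k : ℕ} (M : Matrix (Fin (k+2)) (Fin (k+2)) ℝ)
    (h : ∀ j : Fin (k+2), j ≠ 0 → j ≠ 1 → M 0 j = 0) :
    M.det = M 0 0 * (M.submatrix Fin.succ Fin.succ).det
      - M 0 1 * (M.submatrix Fin.succ ((1 : Fin (k+2)).succAbove)).det := by
  have h01 : (0 : Fin (k+2)) ≠ 1 := by
    intro hh
    have := congrArg Fin.val hh
    simp at this
  rw [Matrix.det_succ_row_zero,
    ← Finset.sum_subset (Finset.subset_univ ({0, 1} : Finset (Fin (k+2))))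
      (by intro j _ hj
          simp only [Finset.mem_insert, Finset.mem_singleton, not_or] at hj
          rw [h j hj.1 hj.2]; ring)]
  rw [Finset.sum_pair h01]
  simp [Fin.succAbove_zero]
  ring

end TridiagTNAux

open TridiagTNAux in
theorem tridiagonal_key {n : ℕ} (a b c : Fin n → ℝ)
    (A : Matrix (Fin n) (Fin n) ℝ)
    (hA : ∀ i j : Fin n, A i j =
      if j = i then a i
      else if j.val = i.val + 1 then b i
      else if i.val = j.val + 1 then c j
      else 0)
    (hb : ∀ i, 0 ≤ b i) (hc : ∀ i, 0 ≤ c i)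
    (hdom : ∀ i : Fin n, (if i.val + 1 < n then b i else 0) +
        (if h : 0 < i.val then c ⟨i.val - 1, Nat.lt_of_le_of_lt (Nat.sub_le _ _) i.isLt⟩ else 0) ≤ a i) :
    ∀ k : ℕ,
      (∀ (r s : Fin k → Fin n), StrictMono r → StrictMono s →
        0 ≤ (A.submatrix r s).det) ∧
      (∀ (r s : Fin (k+1) → Fin n), StrictMono r → StrictMono s → r 0 = s 0 →
        cval c (r 0) * (A.submatrix (r ∘ Fin.succ) (s ∘ Fin.succ)).det
          ≤ (A.submatrix r s).det) := by
  -- basic consequences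
  have hdom' : ∀ i : Fin n, (if i.val + 1 < n then b i else 0) + cval c i ≤ a i := by
    intro i
    have h := hdom i
    unfold cval
    by_cases h1 : 0 < i.val
    · rw [dif_pos h1] at h ⊢; exact h
    · rw [dif_neg h1] at h ⊢; exact h
  have ha : ∀ i, 0 ≤ a i := by
    intro i
    refine le_trans ?_ (hdom' i)
    have h1 : 0 ≤ (if i.val + 1 < n then b i else 0) := by
      split_ifs; exacts [hb _, le_refl 0]
    have h2 := cval_nonneg c hc i
    linarith
  have hcva : ∀ i, cval c i ≤ a i := by
    intro i
    refine le_trans ?_ (hdom' i)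
    have h1 : 0 ≤ (if i.val + 1 < n then b i else 0) := by
      split_ifs; exacts [hb _, le_refl 0]
    linarith
  have hent : ∀ i j : Fin n, 0 ≤ A i j := by
    intro i j
    rw [hA]
    split_ifs
    exacts [ha _, hb _, hc _, le_refl 0]
  have Azero : ∀ i j : Fin n, (j.val + 2 ≤ i.val ∨ i.val + 2 ≤ j.val) → A i j = 0 := by
    intro i j h
    rw [hA]
    have h1 : ¬(j = i) := by
      intro hh; rw [hh] at h; omega
    rw [if_neg h1, if_neg (by omega), if_neg (by omega)]
  intro k
  induction k using Nat.strong_induction_on with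
  | _ k ih =>
  have hP : ∀ (r s : Fin k → Fin n), StrictMono r → StrictMono s →
      0 ≤ (A.submatrix r s).det := by
    rcases k with _ | k
    · intro r s _ _
      simp [Matrix.det_fin_zero]
    · intro r s hr hs
      rcases lt_trichotomy (r 0) (s 0) with hlt | heq | hgt
      · -- row 0 has only one possibly-nonzero entry
        have hv : (r 0).val < (s 0).val := hlt
        have hrow : ∀ j : Fin (k+1), j ≠ 0 → (A.submatrix r s) 0 j = 0 := by
          intro j hj
          apply Azero
          right
          have hjv : 0 < j.val := by
            rcases Nat.eq_zero_or_pos j.val with h' | h'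
            · exact absurd (Fin.ext h' : j = 0) hj
            · exact h'
          have := hs (show (0 : Fin (k+1)) < j from Fin.lt_def.mpr (by simpa using hjv))
          have := Fin.lt_def.mp this
          omega
        rw [det_row0_single _ hrow, Matrix.submatrix_submatrix]
        exact mul_nonneg (hent _ _)
          ((ih k (Nat.lt_succ_self k)).1 _ _ (hr.comp Fin.strictMono_succ)
            (hs.comp Fin.strictMono_succ))
      · -- equal heads: use Q from ih at k
        have hQ := (ih k (Nat.lt_succ_self k)).2 r s hr hs heq
        have htail := (ih k (Nat.lt_succ_self k)).1 _ _ (hr.comp Fin.strictMono_succ)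
          (hs.comp Fin.strictMono_succ)
        have := mul_nonneg (cval_nonneg c hc (r 0)) htail
        linarith
      · -- column 0 has only one possibly-nonzero entry
        have hv : (s 0).val < (r 0).val := hgt
        have hcol : ∀ i : Fin (k+1), i ≠ 0 → (A.submatrix r s) i 0 = 0 := by
          intro i hi
          apply Azero
          left
          have hiv : 0 < i.val := by
            rcases Nat.eq_zero_or_pos i.val with h' | h'
            · exact absurd (Fin.ext h' : i = 0) hi
            · exact h'
          have := hr (show (0 : Fin (k+1)) < i from Fin.lt_def.mpr (by simpa using hiv))
          have := Fin.lt_def.mp this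
          omega
        rw [det_col0_single _ hcol, Matrix.submatrix_submatrix]
        exact mul_nonneg (hent _ _)
          ((ih k (Nat.lt_succ_self k)).1 _ _ (hr.comp Fin.strictMono_succ)
            (hs.comp Fin.strictMono_succ))
  refine ⟨hP, ?_⟩
  intro r s hr hs h0
  rcases k with _ | k
  · -- 1×1 case
    have hdet : (A.submatrix r s).det = A (r 0) (s 0) := by
      rw [Matrix.det_fin_one]; rfl
    have hdet2 : (A.submatrix (r ∘ Fin.succ) (s ∘ Fin.succ)).det = 1 :=
      Matrix.det_fin_zero
    rw [hdet, hdet2, mul_one]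
    have : A (r 0) (s 0) = a (r 0) := by
      rw [hA, if_pos h0.symm]
    rw [this]
    exact hcva _
  · -- size ≥ 2
    have hval0 : (r 0).val = (s 0).val := by rw [h0]
    have hr01 : (r 0).val < (r 1).val := Fin.lt_def.mp (hr (by
      rw [Fin.lt_def]; simp))
    have hs01 : (s 0).val < (s 1).val := Fin.lt_def.mp (hs (by
      rw [Fin.lt_def]; simp))
    have htailSM_r : StrictMono (r ∘ Fin.succ) := hr.comp Fin.strictMono_succ
    have htailSM_s : StrictMono (s ∘ Fin.succ) := hs.comp Fin.strictMono_succ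
    have htail0 : 0 ≤ (A.submatrix (r ∘ Fin.succ) (s ∘ Fin.succ)).det :=
      hP _ _ htailSM_r htailSM_s
    have hB00 : (A.submatrix r s) 0 0 = a (r 0) := by
      show A (r 0) (s 0) = a (r 0)
      rw [hA, if_pos h0.symm]
    by_cases hs1 : (s 1).val = (s 0).val + 1
    · by_cases hr1 : (r 1).val = (r 0).val + 1
      · -- double expansion case
        have hrow : ∀ j : Fin (k+2), j ≠ 0 → j ≠ 1 → (A.submatrix r s) 0 j = 0 := by
          intro j hj0 hj1
          apply Azero
          right
          have hjv : 1 < j.val := by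
            have h1 : j.val ≠ 0 := fun h => hj0 (Fin.ext (by simpa using h))
            have h2 : j.val ≠ 1 := fun h => hj1 (Fin.ext (by simpa using h))
            omega
          have := Fin.lt_def.mp (hs (show (1 : Fin (k+2)) < j from Fin.lt_def.mpr
            (by simpa using hjv)))
          omega
        rw [det_row0_double _ hrow]
        set C := (A.submatrix r s).submatrix Fin.succ ((1 : Fin (k+2)).succAbove) with hC
        have hcol : ∀ i : Fin (k+1), i ≠ 0 → C i 0 = 0 := by
          intro i hi
          have hiv : 0 < i.val := by
            rcases Nat.eq_zero_or_pos i.val with h' | h'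
            · exact absurd (Fin.ext h' : i = 0) hi
            · exact h'
          show (A.submatrix r s) i.succ ((1 : Fin (k+2)).succAbove 0) = 0
          rw [succAbove_one_zero]
          show A (r i.succ) (s 0) = 0
          apply Azero
          left
          have h1i : (1 : Fin (k+2)) < i.succ := Fin.lt_def.mpr (by
            show (1 : Fin (k+2)).val < i.val + 1; rw [Fin.val_one]; omega)
          have := Fin.lt_def.mp (hr h1i)
          omega
        rw [det_col0_single _ hcol]
        have hC00 : C 0 0 = c (s 0) := by
          show (A.submatrix r s) (0 : Fin (k+1)).succ ((1 : Fin (k+2)).succAbove 0) = c (s 0)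
          rw [succAbove_one_zero]
          show A (r 1) (s 0) = c (s 0)
          rw [hA, if_neg (by intro hh; rw [hh] at hval0; omega),
            if_neg (by omega), if_pos (by omega)]
        have hCsub : C.submatrix Fin.succ Fin.succ
            = A.submatrix ((r ∘ Fin.succ) ∘ Fin.succ) ((s ∘ Fin.succ) ∘ Fin.succ) := by
          ext i j
          show (A.submatrix r s) i.succ.succ ((1 : Fin (k+2)).succAbove j.succ) = _
          rw [succAbove_one_succ]
          rfl
        rw [hC00, hCsub]
        have hB01 : (A.submatrix r s) 0 1 = b (r 0) := by
          show A (r 0) (s 1) = b (r 0)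
          rw [hA, if_neg (by intro hh; rw [hh] at hs1; omega),
            if_pos (by omega)]
        rw [hB00, hB01]
        -- apply Q at k for the tail
        have heq1 : (r ∘ Fin.succ) 0 = (s ∘ Fin.succ) 0 := by
          apply Fin.ext
          show (r 1).val = (s 1).val
          omega
        have hQ1 := (ih k (Nat.lt_succ_self k)).2 (r ∘ Fin.succ) (s ∘ Fin.succ)
          htailSM_r htailSM_s heq1
        have hcv1 : cval c ((r ∘ Fin.succ) 0) = c (s 0) := by
          show cval c (r 1) = c (s 0)
          unfold cval
          rw [dif_pos (by omega)]
          congr 1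
          apply Fin.ext
          show (r 1).val - 1 = (s 0).val
          omega
        rw [hcv1] at hQ1
        set D1 := (A.submatrix (r ∘ Fin.succ) (s ∘ Fin.succ)).det with hD1def
        set D2 := (A.submatrix ((r ∘ Fin.succ) ∘ Fin.succ) ((s ∘ Fin.succ) ∘ Fin.succ)).det
          with hD2def
        rw [Matrix.submatrix_submatrix]
        -- now goal: cval c (r 0) * D1 ≤ a (r 0) * D1 - b (r 0) * (c (s 0) * D2)
        have hbnd : b (r 0) + cval c (r 0) ≤ a (r 0) := by
          have h := hdom' (r 0)
          rw [if_pos (by have := (s 1).isLt; omega)] at h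
          exact h
        have h1 : b (r 0) * (c (s 0) * D2) ≤ b (r 0) * D1 :=
          mul_le_mul_of_nonneg_left hQ1 (hb _)
        have h2 : cval c (r 0) * D1 ≤ (a (r 0) - b (r 0)) * D1 :=
          mul_le_mul_of_nonneg_right (by linarith) htail0
        have hD1eq : (A.submatrix (r ∘ Fin.succ) (s ∘ Fin.succ)).det = D1 := rfl
        rw [hD1eq]
        nlinarith [h1, h2]
      · -- r 1 ≥ r 0 + 2 : single column expansion
        have hcol : ∀ i : Fin (k+2), i ≠ 0 → (A.submatrix r s) i 0 = 0 := by
          intro i hi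
          apply Azero
          left
          have hiv : 0 < i.val := by
            rcases Nat.eq_zero_or_pos i.val with h' | h'
            · exact absurd (Fin.ext h' : i = 0) hi
            · exact h'
          have h1 := Fin.lt_def.mp (hr (show (0 : Fin (k+2)) < i from Fin.lt_def.mpr
            (by simpa using hiv)))
          rcases Nat.eq_or_lt_of_le (Nat.one_le_iff_ne_zero.mpr (by omega) : 1 ≤ i.val)
            with h' | h'
          · have : i = 1 := Fin.ext (by simpa using h'.symm)
            rw [this]
            omega
          · have := Fin.lt_def.mp (hr (show (1 : Fin (k+2)) < i from Fin.lt_def.mpr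
              (by simpa using h')))
            omega
        rw [det_col0_single _ hcol, Matrix.submatrix_submatrix, hB00]
        exact mul_le_mul_of_nonneg_right (hcva _) htail0
    · -- s 1 ≥ s 0 + 2 : single row expansion
      have hrow : ∀ j : Fin (k+2), j ≠ 0 → (A.submatrix r s) 0 j = 0 := by
        intro j hj
        apply Azero
        right
        have hjv : 0 < j.val := by
          rcases Nat.eq_zero_or_pos j.val with h' | h'
          · exact absurd (Fin.ext h' : j = 0) hj
          · exact h'
        rcases Nat.eq_or_lt_of_le (Nat.one_le_iff_ne_zero.mpr (by omega) : 1 ≤ j.val)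
          with h' | h'
        · have : j = 1 := Fin.ext (by simpa using h'.symm)
          rw [this]
          omega
        · have := Fin.lt_def.mp (hs (show (1 : Fin (k+2)) < j from Fin.lt_def.mpr
            (by simpa using h')))
          omega
      rw [det_row0_single _ hrow, Matrix.submatrix_submatrix, hB00]
      exact mul_le_mul_of_nonneg_right (hcva _) htail0

theorem tridiagonal_dominance_tn {n : ℕ} (a b c : Fin n → ℝ)
    (A : Matrix (Fin n) (Fin n) ℝ)
    (hA : ∀ i j : Fin n, A i j =
      if j = i then a i
      else if j.val = i.val + 1 then b i
      else if i.val = j.val + 1 then c j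
      else 0)
    (hb : ∀ i, 0 ≤ b i) (hc : ∀ i, 0 ≤ c i)
    (hdom : ∀ i : Fin n, (if i.val + 1 < n then b i else 0) +
        (if h : 0 < i.val then c ⟨i.val - 1, by have := i.isLt; omega⟩ else 0) ≤ a i) :
    TotallyNonneg A := by
  intro k r s hr hs
  exact (tridiagonal_key a b c A hA hb hc hdom k).1 r s hr hs
end

section
/- Let A = I + p·E_{i,i-1} (or A = I + p·E_{i-1,i}) with p ≥ 0 be a totally nonnegative elementary bidiagonal matrix. Then for every x ∈ ℝⁿ, s⁻(Ax) ≤ s⁻(x) and s⁺(Ax) ≤ s⁺(x). -/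
open scoped Classical

namespace CSC
open List

lemma csc_cons_cons (a b : ℝ) (t : List ℝ) :
    countSignChanges (a::b::t) = (if a * b < 0 then 1 else 0) + countSignChanges (b::t) := rfl

lemma csc_le_cons (a : ℝ) (l : List ℝ) : countSignChanges l ≤ countSignChanges (a::l) := by
  cases l with
  | nil => simp [countSignChanges]
  | cons b t => rw [csc_cons_cons]; omega

lemma csc_cons_le_one_add (a : ℝ) (l : List ℝ) :
    countSignChanges (a::l) ≤ 1 + countSignChanges l := by
  cases l with
  | nil => simp [countSignChanges]
  | cons b t => rw [csc_cons_cons]; split <;> omega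

lemma csc_le_length (l : List ℝ) : countSignChanges l ≤ l.length := by
  induction l with
  | nil => simp [countSignChanges]
  | cons a t ih =>
    calc countSignChanges (a::t) ≤ 1 + countSignChanges t := csc_cons_le_one_add a t
    _ ≤ 1 + t.length := by omega
    _ = (a::t).length := by simp [Nat.add_comm]

lemma ind_tri {a b c : ℝ} (hb : b ≠ 0) :
    (if a*c < 0 then (1:ℕ) else 0) ≤ (if a*b < 0 then 1 else 0) + (if b*c < 0 then 1 else 0) := by
  by_cases h : a*c < 0
  · rw [if_pos h]
    by_cases h1 : a*b < 0
    · simp [h1]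
    · have h2 : b*c < 0 := by
        push_neg at h1
        have ha : a ≠ 0 := fun h0 => by simp [h0] at h
        rcases lt_or_gt_of_ne hb with hbn | hbp
        · have ha' : a < 0 := by
            rcases lt_or_gt_of_ne ha with h'|h'
            · exact h'
            · exfalso; nlinarith
          have hc : 0 < c := by nlinarith
          exact mul_neg_of_neg_of_pos hbn hc
        · have ha' : 0 < a := by
            rcases lt_or_gt_of_ne ha with h'|h'
            · exfalso; nlinarith
            · exact h'
          have hc : c < 0 := by nlinarith
          exact mul_neg_of_pos_of_neg hbp hc
      simp [h2]
  · simp [h]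

lemma csc_skip {b : ℝ} (a : ℝ) (l : List ℝ) (hb : b ≠ 0) :
    countSignChanges (a::l) ≤ countSignChanges (a::b::l) := by
  cases l with
  | nil => simp [countSignChanges]
  | cons c t =>
    rw [csc_cons_cons, csc_cons_cons a b, csc_cons_cons b c]
    have := ind_tri (a := a) (c := c) hb
    omega

lemma csc_sublist_cons {l' l : List ℝ} (h : l' <+ l) (hl : ∀ x ∈ l, x ≠ 0) :
    ∀ a, countSignChanges (a::l') ≤ countSignChanges (a::l) := by
  induction h with
  | slnil => intro a; exact le_refl _
  | cons b h ih =>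
    intro a
    rename_i l₁ l₂
    have hb : b ≠ 0 := hl b mem_cons_self
    have hl₂ : ∀ x ∈ l₂, x ≠ 0 := fun x hx => hl x (mem_cons_of_mem _ hx)
    exact le_trans (ih hl₂ a) (csc_skip a l₂ hb)
  | cons_cons b h ih =>
    intro a
    rename_i l₁ l₂
    have hl₂ : ∀ x ∈ l₂, x ≠ 0 := fun x hx => hl x (mem_cons_of_mem _ hx)
    rw [csc_cons_cons, csc_cons_cons]
    exact Nat.add_le_add_left (ih hl₂ b) _

lemma csc_sublist {l' l : List ℝ} (h : l' <+ l) (hl : ∀ x ∈ l, x ≠ 0) :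
    countSignChanges l' ≤ countSignChanges l := by
  induction h with
  | slnil => exact le_refl _
  | cons b h ih =>
    rename_i l₁ l₂
    have hl₂ : ∀ x ∈ l₂, x ≠ 0 := fun x hx => hl x (mem_cons_of_mem _ hx)
    exact le_trans (ih hl₂) (csc_le_cons b l₂)
  | cons_cons b h ih =>
    rename_i l₁ l₂
    have hl₂ : ∀ x ∈ l₂, x ≠ 0 := fun x hx => hl x (mem_cons_of_mem _ hx)
    exact csc_sublist_cons h hl₂ b

lemma csc_congr {l m : List ℝ} (h : List.Forall₂ (fun u v => u * v > 0) l m) :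
    countSignChanges l = countSignChanges m := by
  induction h with
  | nil => rfl
  | cons hau htail ih =>
    rename_i a u l' m'
    cases htail with
    | nil => rfl
    | cons hbv h2 =>
      rename_i b v l'' m''
      rw [csc_cons_cons, csc_cons_cons]
      have : (a*b < 0) ↔ (u*v < 0) := by constructor <;> intro <;> nlinarith
      rw [ih]
      congr 1
      simp [this]

lemma forall2_self {l : List ℝ} (hl : ∀ x ∈ l, x ≠ 0) :
    List.Forall₂ (fun u v : ℝ => u * v > 0) l l := by
  induction l with
  | nil => exact List.Forall₂.nil
  | cons a t ih =>
    exact List.Forall₂.cons (mul_self_pos.mpr (hl a mem_cons_self))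
      (ih (fun x hx => hl x (mem_cons_of_mem _ hx)))

lemma csc_head_congr {l₁ l₂ : List ℝ} (h : countSignChanges l₁ = countSignChanges l₂)
    (hh : l₁.head? = l₂.head?) (c : ℝ) :
    countSignChanges (c::l₁) = countSignChanges (c::l₂) := by
  cases l₁ with
  | nil => cases l₂ with
    | nil => rfl
    | cons b t => simp at hh
  | cons a t₁ => cases l₂ with
    | nil => simp at hh
    | cons b t₂ =>
      simp at hh
      subst hh; rw [csc_cons_cons, csc_cons_cons, h]

lemma csc_dup (P : List ℝ) (b : ℝ) (Q : List ℝ) :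
    countSignChanges (P ++ b::b::Q) = countSignChanges (P ++ b::Q) := by
  induction P with
  | nil =>
    simp only [nil_append, csc_cons_cons]
    rw [if_neg (by nlinarith [mul_self_nonneg b])]
    omega
  | cons c P ih =>
    simp only [cons_append]
    apply csc_head_congr ih _ c
    cases P <;> simp


noncomputable def fl (a : ℝ) : List ℝ := if a = 0 then [] else [a]

lemma fl_ne (x : ℝ) : ∀ y ∈ fl x, y ≠ 0 := by
  intro y hy
  unfold fl at hy
  split at hy <;> simp_all

lemma fl_of_ne {x : ℝ} (h : x ≠ 0) : fl x = [x] := by simp [fl, h]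

lemma forall2_cons_cons {a u b v : ℝ} {l m : List ℝ} (h1 : a*u > 0) (h2 : b*v > 0)
    (h : List.Forall₂ (fun u v : ℝ => u * v > 0) l m) :
    List.Forall₂ (fun u v : ℝ => u * v > 0) (a::b::l) (u::v::m) :=
  List.Forall₂.cons h1 (List.Forall₂.cons h2 h)

lemma ne_app {P Q : List ℝ} (hP : ∀ x ∈ P, x ≠ 0) (hQ : ∀ x ∈ Q, x ≠ 0) :
    ∀ x ∈ P ++ Q, x ≠ 0 := by
  intro x hx
  rcases mem_append.mp hx with h | h
  exacts [hP x h, hQ x h]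

lemma ne_cons {b : ℝ} {Q : List ℝ} (hb : b ≠ 0) (hQ : ∀ x ∈ Q, x ≠ 0) :
    ∀ x ∈ b :: Q, x ≠ 0 := by
  intro x hx
  rcases mem_cons.mp hx with h | h
  · exact h ▸ hb
  · exact hQ x h

lemma sub_right (P Q m : List ℝ) (b : ℝ) : P ++ b :: Q <+ P ++ (m ++ b :: Q) :=
  (List.sublist_append_right m (b::Q)).append_left P

lemma sub_left (P Q m : List ℝ) (b : ℝ) : P ++ b :: Q <+ P ++ b :: (m ++ Q) := by
  have : (P ++ [b]) ++ Q <+ (P ++ [b]) ++ (m ++ Q) :=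
    (List.sublist_append_right m Q).append_left (P ++ [b])
  simpa using this

lemma key_right {P Q : List ℝ} (hP : ∀ x ∈ P, x ≠ 0) (hQ : ∀ x ∈ Q, x ≠ 0)
    {a a' b : ℝ} (hb : b ≠ 0) (h : a' = 0 ∨ a*a' > 0 ∨ a'*b > 0) :
    countSignChanges (P ++ (fl a' ++ b :: Q)) ≤ countSignChanges (P ++ (fl a ++ b :: Q)) := by
  have hne : ∀ x ∈ P ++ (fl a ++ b :: Q), x ≠ 0 :=
    ne_app hP (ne_app (fl_ne a) (ne_cons hb hQ))
  have hsub : countSignChanges (P ++ b :: Q) ≤ countSignChanges (P ++ (fl a ++ b :: Q)) :=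
    csc_sublist (sub_right P Q (fl a) b) hne
  rcases h with h | h | h
  · rw [h]; simpa [fl] using hsub
  · have ha : a ≠ 0 := fun h0 => by simp [h0] at h
    have ha' : a' ≠ 0 := fun h0 => by simp [h0] at h
    rw [fl_of_ne ha, fl_of_ne ha']
    exact le_of_eq (csc_congr (List.rel_append (forall2_self hP)
      (forall2_cons_cons (by nlinarith) (mul_self_pos.mpr hb) (forall2_self hQ))))
  · have ha' : a' ≠ 0 := fun h0 => by simp [h0] at h
    rw [fl_of_ne ha']
    simp only [List.singleton_append]
    have e1 : countSignChanges (P ++ a' :: b :: Q) = countSignChanges (P ++ b :: b :: Q) :=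
      csc_congr (List.rel_append (forall2_self hP)
        (forall2_cons_cons h (mul_self_pos.mpr hb) (forall2_self hQ)))
    rw [e1, csc_dup]
    exact hsub

lemma key_left {P Q : List ℝ} (hP : ∀ x ∈ P, x ≠ 0) (hQ : ∀ x ∈ Q, x ≠ 0)
    {a a' b : ℝ} (hb : b ≠ 0) (h : a' = 0 ∨ a*a' > 0 ∨ a'*b > 0) :
    countSignChanges (P ++ b :: (fl a' ++ Q)) ≤ countSignChanges (P ++ b :: (fl a ++ Q)) := by
  have hne : ∀ x ∈ P ++ b :: (fl a ++ Q), x ≠ 0 :=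
    ne_app hP (ne_cons hb (ne_app (fl_ne a) hQ))
  have hsub : countSignChanges (P ++ b :: Q) ≤ countSignChanges (P ++ b :: (fl a ++ Q)) :=
    csc_sublist (sub_left P Q (fl a) b) hne
  rcases h with h | h | h
  · rw [h]; simpa [fl] using hsub
  · have ha : a ≠ 0 := fun h0 => by simp [h0] at h
    have ha' : a' ≠ 0 := fun h0 => by simp [h0] at h
    rw [fl_of_ne ha, fl_of_ne ha']
    exact le_of_eq (csc_congr (List.rel_append (forall2_self hP)
      (forall2_cons_cons (mul_self_pos.mpr hb) (by nlinarith) (forall2_self hQ))))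
  · have ha' : a' ≠ 0 := fun h0 => by simp [h0] at h
    rw [fl_of_ne ha']
    simp only [List.singleton_append]
    have e1 : countSignChanges (P ++ b :: a' :: Q) = countSignChanges (P ++ b :: b :: Q) :=
      csc_congr (List.rel_append (forall2_self hP)
        (forall2_cons_cons (mul_self_pos.mpr hb) (by nlinarith) (forall2_self hQ)))
    rw [e1, csc_dup]
    exact hsub

lemma rep_right {P Q : List ℝ} (hP : ∀ x ∈ P, x ≠ 0) (hQ : ∀ x ∈ Q, x ≠ 0)
    {v c β : ℝ} (hβ : β ≠ 0) (hc : c ≠ 0) (h : v*c > 0 ∨ v*β > 0) :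
    countSignChanges (P ++ v :: β :: Q) ≤ countSignChanges (P ++ c :: β :: Q) := by
  rcases h with h | h
  · exact le_of_eq (csc_congr (List.rel_append (forall2_self hP)
      (forall2_cons_cons (by nlinarith) (mul_self_pos.mpr hβ) (forall2_self hQ))))
  · have e1 : countSignChanges (P ++ v :: β :: Q) = countSignChanges (P ++ β :: β :: Q) :=
      csc_congr (List.rel_append (forall2_self hP)
        (forall2_cons_cons h (mul_self_pos.mpr hβ) (forall2_self hQ)))
    rw [e1, csc_dup]
    apply csc_sublist (sub_right P Q [c] β)
    intro x hx
    rcases mem_append.mp hx with h1 | h1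
    · exact hP x h1
    · rcases mem_append.mp h1 with h2 | h2
      · simp at h2; exact h2 ▸ hc
      · exact ne_cons hβ hQ x h2


lemma rep_left {P Q : List ℝ} (hP : ∀ x ∈ P, x ≠ 0) (hQ : ∀ x ∈ Q, x ≠ 0)
    {v c β : ℝ} (hβ : β ≠ 0) (hc : c ≠ 0) (h : v*c > 0 ∨ v*β > 0) :
    countSignChanges (P ++ β :: v :: Q) ≤ countSignChanges (P ++ β :: c :: Q) := by
  rcases h with h | h
  · exact le_of_eq (csc_congr (List.rel_append (forall2_self hP)
      (forall2_cons_cons (mul_self_pos.mpr hβ) (by nlinarith) (forall2_self hQ))))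
  · have e1 : countSignChanges (P ++ β :: v :: Q) = countSignChanges (P ++ β :: β :: Q) :=
      csc_congr (List.rel_append (forall2_self hP)
        (forall2_cons_cons (mul_self_pos.mpr hβ) (by nlinarith) (forall2_self hQ)))
    rw [e1, csc_dup]
    apply csc_sublist (sub_left P Q [c] β)
    intro x hx
    rcases mem_append.mp hx with h1 | h1
    · exact hP x h1
    · rcases mem_cons.mp h1 with h2 | h2
      · exact h2 ▸ hβ
      · rcases mem_append.mp h2 with h3 | h3
        · simp at h3; exact h3 ▸ hc
        · exact hQ x h3

lemma tri {p a b : ℝ} (hp : 0 ≤ p) :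
    a + p*b = 0 ∨ a*(a + p*b) > 0 ∨ (a + p*b)*b > 0 := by
  by_contra hcon
  push_neg at hcon
  obtain ⟨h0, h1, h2⟩ := hcon
  have hpos : 0 < (a + p*b) * (a + p*b) := mul_self_pos.mpr h0
  nlinarith [mul_nonneg hp (neg_nonneg.mpr h2)]

lemma vab {v a b : ℝ} (hv : v ≠ 0) (hab : a*b < 0) : v*a > 0 ∨ v*b > 0 := by
  by_contra hcon
  push_neg at hcon
  obtain ⟨h1, h2⟩ := hcon
  have hpos : 0 < v * v := mul_self_pos.mpr hv
  nlinarith [mul_nonneg (neg_nonneg.mpr h1) (neg_nonneg.mpr h2)]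

lemma filter_ne (l : List ℝ) : ∀ x ∈ l.filter (fun x => decide (x ≠ 0)), x ≠ 0 := by
  intro x hx
  have := List.of_mem_filter hx
  simpa using this

lemma ofFn_update {n : ℕ} (x : Fin n → ℝ) (i : Fin n) (v : ℝ) :
    List.ofFn (Function.update x i v) = (List.ofFn x).set i.val v := by
  apply List.ext_getElem
  · simp
  · intro k h1 h2
    simp only [List.getElem_ofFn, List.getElem_set]
    rcases eq_or_ne k i.val with h | h
    · have hki : (⟨k, by simpa using h1⟩ : Fin n) = i := Fin.ext h
      rw [hki, Function.update_self, if_pos h.symm]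
    · rw [if_neg h.symm, Function.update_of_ne (by simp [Fin.ext_iff]; omega)]

lemma mem_take_ne {l : List ℝ} (hl : ∀ x ∈ l, x ≠ 0) (k : ℕ) : ∀ x ∈ l.take k, x ≠ 0 :=
  fun x hx => hl x (List.mem_of_mem_take hx)

lemma mem_drop_ne {l : List ℝ} (hl : ∀ x ∈ l, x ≠ 0) (k : ℕ) : ∀ x ∈ l.drop k, x ≠ 0 :=
  fun x hx => hl x (List.mem_of_mem_drop hx)


lemma decomp_right {n : ℕ} (f : Fin n → ℝ) (i j : Fin n) (hij : i.val + 1 = j.val) (c : ℝ) :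
    List.ofFn f = (List.ofFn f).take i.val ++ f i :: f j :: (List.ofFn f).drop (i.val+2)
    ∧ (List.ofFn f).set i.val c
      = (List.ofFn f).take i.val ++ c :: f j :: (List.ofFn f).drop (i.val+2) := by
  set L := List.ofFn f with hL
  have hi : i.val < L.length := by simp [hL]
  have hj : i.val + 1 < L.length := by simp only [hL, List.length_ofFn]; omega
  have hgi : L[i.val] = f i := by simp [hL]
  have hgj : L[i.val+1]'hj = f j := by
    simp only [hL, List.getElem_ofFn]
    congr 1
    exact Fin.ext hij
  have hdrop : L.drop (i.val+1) = f j :: L.drop (i.val+2) := by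
    rw [List.drop_eq_getElem_cons hj, hgj]
  constructor
  · conv_lhs => rw [← List.take_append_drop i.val L, List.drop_eq_getElem_cons hi, hgi, hdrop]
  · rw [List.set_eq_take_cons_drop _ hi, hdrop]

lemma decomp_left {n : ℕ} (f : Fin n → ℝ) (i j : Fin n) (hij : j.val + 1 = i.val) (c : ℝ) :
    List.ofFn f = (List.ofFn f).take j.val ++ f j :: f i :: (List.ofFn f).drop (i.val+1)
    ∧ (List.ofFn f).set i.val c
      = (List.ofFn f).take j.val ++ f j :: c :: (List.ofFn f).drop (i.val+1) := by
  set L := List.ofFn f with hL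
  have hi : i.val < L.length := by simp [hL]
  have hj : j.val < L.length := by simp only [hL, List.length_ofFn]; omega
  have hgi : L[i.val] = f i := by simp [hL]
  have hgj : L[j.val] = f j := by simp [hL]
  have hdropj : L.drop j.val = f j :: f i :: L.drop (i.val+1) := by
    rw [List.drop_eq_getElem_cons hj, hgj, hij, List.drop_eq_getElem_cons hi, hgi]
  have htake : L.take i.val = L.take j.val ++ [f j] := by
    rw [← hij, List.take_succ, List.getElem?_eq_getElem hj, hgj]
    rfl
  constructor
  · conv_lhs => rw [← List.take_append_drop j.val L, hdropj]
  · rw [List.set_eq_take_cons_drop _ hi, htake]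
    simp

lemma comp_exists {n : ℕ} (y : Fin n → ℝ) :
    ∃ z : Fin n → ℝ, ∀ i, (y i ≠ 0 → z i = y i) ∧ (y i = 0 → z i = 1 ∨ z i = -1) := by
  refine ⟨fun k => if y k = 0 then 1 else y k, fun k => ⟨fun h => if_neg h, fun h => Or.inl (if_pos h)⟩⟩

lemma comp_nonzero {n : ℕ} {y z : Fin n → ℝ}
    (hz : ∀ i, (y i ≠ 0 → z i = y i) ∧ (y i = 0 → z i = 1 ∨ z i = -1)) (k : Fin n) : z k ≠ 0 := by
  by_cases h : y k = 0
  · rcases (hz k).2 h with h1 | h1 <;> rw [h1] <;> norm_num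
  · rw [(hz k).1 h]; exact h

lemma ofFn_nonzero {n : ℕ} {z : Fin n → ℝ} (h : ∀ k, z k ≠ 0) :
    ∀ t ∈ List.ofFn z, t ≠ 0 := by
  intro t ht
  obtain ⟨k, hk⟩ := List.mem_ofFn.mp ht
  exact hk ▸ h k


lemma fil_left (T R : List ℝ) (b c : ℝ) (hb : b ≠ 0) :
    (T ++ b :: c :: R).filter (fun t => decide (t ≠ 0)) =
    T.filter (fun t => decide (t ≠ 0)) ++ b :: (fl c ++ R.filter (fun t => decide (t ≠ 0))) := by
  rw [List.filter_append, List.filter_cons, List.filter_cons]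
  by_cases hcz : c = 0 <;> simp [hb, hcz, fl]

lemma fil_right (T R : List ℝ) (c b : ℝ) (hb : b ≠ 0) :
    (T ++ c :: b :: R).filter (fun t => decide (t ≠ 0)) =
    T.filter (fun t => decide (t ≠ 0)) ++ (fl c ++ b :: R.filter (fun t => decide (t ≠ 0))) := by
  rw [List.filter_append, List.filter_cons, List.filter_cons]
  by_cases hcz : c = 0 <;> simp [hb, hcz, fl]

end CSC


theorem eb_svdp {n : ℕ} (p : ℝ) (hp : 0 ≤ p) (i j : Fin n)
    (hij : j.val + 1 = i.val ∨ i.val + 1 = j.val)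
    (A : Matrix (Fin n) (Fin n) ℝ)
    (hA : A = (1 : Matrix (Fin n) (Fin n) ℝ) + p • Matrix.single i j 1) :
    ∀ x : Fin n → ℝ, sMinus (A.mulVec x) ≤ sMinus x ∧ sPlus (A.mulVec x) ≤ sPlus x := by
  intro x
  have hy : A.mulVec x = Function.update x i (x i + p * x j) := by
    subst hA
    funext k
    rw [Matrix.add_mulVec, Matrix.one_mulVec, Matrix.smul_mulVec]
    simp only [Pi.add_apply, Pi.smul_apply, smul_eq_mul, Matrix.mulVec, dotProduct,
      Matrix.single, Matrix.of_apply, ite_mul, one_mul, zero_mul, Function.update]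
    by_cases hk : k = i
    · subst hk
      simp [Finset.sum_ite_eq']
    · rw [dif_neg hk]
      have h1 : ∀ m : Fin n, (if i = k ∧ j = m then x m else 0) = 0 := by
        intro m; rw [if_neg (by tauto)]
      simp [h1]
  by_cases h0 : p * x j = 0
  · have hyx : A.mulVec x = x := by
      rw [hy, h0, add_zero, Function.update_eq_self]
    rw [hyx]
    exact ⟨le_refl _, le_refl _⟩
  · have hb : x j ≠ 0 := fun h => h0 (by rw [h, mul_zero])
    have hpp : 0 < p := lt_of_le_of_ne hp (fun h => h0 (by rw [← h, zero_mul]))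
    have hijne : i ≠ j := by
      rcases hij with h | h <;> (intro he; rw [he] at h; omega)
    set a' : ℝ := x i + p * x j with ha'
    have htri : a' = 0 ∨ x i * a' > 0 ∨ a' * x j > 0 := CSC.tri hp
    constructor
    · -- sMinus
      rw [hy]
      unfold sMinus
      rw [CSC.ofFn_update]
      rcases hij with hc | hc
      · obtain ⟨hd1, hd2⟩ := CSC.decomp_left x i j hc a'
        rw [hd2]
        conv_rhs => rw [hd1]
        rw [CSC.fil_left _ _ _ _ hb, CSC.fil_left _ _ _ _ hb]
        exact CSC.key_left (CSC.filter_ne _) (CSC.filter_ne _) hb htri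
      · obtain ⟨hd1, hd2⟩ := CSC.decomp_right x i j hc a'
        rw [hd2]
        conv_rhs => rw [hd1]
        rw [CSC.fil_right _ _ _ _ hb, CSC.fil_right _ _ _ _ hb]
        exact CSC.key_right (CSC.filter_ne _) (CSC.filter_ne _) hb htri
    · -- sPlus
      rw [hy]
      set y := Function.update x i a' with hydef
      have hyi : y i = a' := Function.update_self i a' x
      have hyk : ∀ k, k ≠ i → y k = x k := fun k hk => Function.update_of_ne hk _ _
      unfold sPlus
      apply csSup_le
      · obtain ⟨z, hz⟩ := CSC.comp_exists y
        exact ⟨_, z, hz, rfl⟩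
      · rintro k ⟨z', hz', rfl⟩
        have hz'ne : ∀ m, z' m ≠ 0 := CSC.comp_nonzero hz'
        have hyj : y j = x j := hyk j (Ne.symm hijne)
        have hz'j : z' j = x j := by
          rw [(hz' j).1 (by rw [hyj]; exact hb), hyj]
        set c : ℝ := if x i = 0 then 1 else x i with hcdef
        have hcne : c ≠ 0 := by
          rw [hcdef]; split_ifs with h
          · exact one_ne_zero
          · exact h
        set z := Function.update z' i c with hzdef
        have hcomp : ∀ m, (x m ≠ 0 → z m = x m) ∧ (x m = 0 → z m = 1 ∨ z m = -1) := by
          intro m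
          by_cases hm : m = i
          · subst hm
            constructor
            · intro h
              rw [hzdef, Function.update_self, hcdef, if_neg h]
            · intro h
              left
              rw [hzdef, Function.update_self, hcdef, if_pos h]
          · have h1 : z m = z' m := Function.update_of_ne hm _ _
            have h2 : y m = x m := hyk m hm
            constructor
            · intro h; rw [h1, (hz' m).1 (h2 ▸ h), h2]
            · intro h; rw [h1]; exact (hz' m).2 (h2 ▸ h)
        have hdisj : z' i * c > 0 ∨ z' i * x j > 0 := by
          by_cases hxi : x i = 0
          · right
            have ha'v : a' = p * x j := by rw [ha', hxi, zero_add]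
            have hz'i : z' i = a' := by rw [(hz' i).1 (by rw [hyi, ha'v]; exact h0), hyi]
            rw [hz'i, ha'v]
            have h2 : 0 < x j * x j := mul_self_pos.mpr hb
            nlinarith
          · by_cases ha0 : a' = 0
            · have hab : x i * x j < 0 := by
                have h3 : x i = -(p * x j) := by rw [ha'] at ha0; linarith
                have h2 : 0 < x j * x j := mul_self_pos.mpr hb
                rw [h3]; nlinarith
              rcases CSC.vab (hz'ne i) hab with h | h
              · left; rw [hcdef, if_neg hxi]; exact h
              · right; exact h
            · have hz'i : z' i = a' := by rw [(hz' i).1 (by rw [hyi]; exact ha0), hyi]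
              rcases htri with h | h | h
              · exact absurd h ha0
              · left; rw [hz'i, hcdef, if_neg hxi]; nlinarith
              · right; rw [hz'i]; exact h
        have hMne : ∀ t ∈ List.ofFn z', t ≠ 0 := CSC.ofFn_nonzero hz'ne
        have hineq : countSignChanges (List.ofFn z') ≤ countSignChanges (List.ofFn z) := by
          rw [hzdef, CSC.ofFn_update]
          rcases hij with hcs | hcs
          · obtain ⟨hd1, hd2⟩ := CSC.decomp_left z' i j hcs c
            rw [hd2]
            conv_lhs => rw [hd1]
            rw [hz'j]
            exact CSC.rep_left (CSC.mem_take_ne hMne _) (CSC.mem_drop_ne hMne _) hb hcne hdisj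
          · obtain ⟨hd1, hd2⟩ := CSC.decomp_right z' i j hcs c
            rw [hd2]
            conv_lhs => rw [hd1]
            rw [hz'j]
            exact CSC.rep_right (CSC.mem_take_ne hMne _) (CSC.mem_drop_ne hMne _) hb hcne hdisj
        have hbdd : BddAbove {k | ∃ w : Fin n → ℝ,
            (∀ m, (x m ≠ 0 → w m = x m) ∧ (x m = 0 → w m = 1 ∨ w m = -1)) ∧
            countSignChanges (List.ofFn w) = k} := by
          refine ⟨n, ?_⟩
          rintro k ⟨w, _, rfl⟩
          calc countSignChanges (List.ofFn w) ≤ (List.ofFn w).length := CSC.csc_le_length _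
          _ = n := by simp
        exact hineq.trans (le_csSup hbdd ⟨z, hcomp, rfl⟩)
end

section
/- If A is an n×n totally nonnegative matrix, then for every x ∈ ℝⁿ, s⁻(Ax) ≤ s⁻(x). -/
open scoped Classical

open scoped Matrix

lemma csc_cons_cons (a b : ℝ) (t : List ℝ) :
    countSignChanges (a :: b :: t) = (if a * b < 0 then 1 else 0) + countSignChanges (b :: t) := rfl

lemma filter_ofFn_zero {n : ℕ} (y : Fin (n+1) → ℝ) (h : y 0 = 0) :
    (List.ofFn y).filter (fun x => decide (x ≠ 0)) =
      (List.ofFn (fun i => y i.succ)).filter (fun x => decide (x ≠ 0)) := by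
  rw [List.ofFn_succ, List.filter_cons]
  simp [h]

lemma sMinus_cons_zero {n : ℕ} (y : Fin (n+1) → ℝ) (h : y 0 = 0) :
    sMinus y = sMinus (fun i => y i.succ) := by
  unfold sMinus
  rw [filter_ofFn_zero y h]

lemma filter_ofFn_ne {n : ℕ} (y : Fin (n+1) → ℝ) (h : y 0 ≠ 0) :
    (List.ofFn y).filter (fun x => decide (x ≠ 0)) =
      y 0 :: (List.ofFn (fun i => y i.succ)).filter (fun x => decide (x ≠ 0)) := by
  rw [List.ofFn_succ, List.filter_cons]
  simp [h]

lemma filter_ofFn_first : ∀ {n : ℕ} (t : Fin n → ℝ) (i₀ : Fin n), t i₀ ≠ 0 →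
    (∀ j, j < i₀ → t j = 0) →
    ∃ M, (List.ofFn t).filter (fun x => decide (x ≠ 0)) = t i₀ :: M := by
  intro n
  induction n with
  | zero => exact fun t i₀ => i₀.elim0
  | succ n ih =>
    intro t i₀ hne hz
    rcases Fin.eq_zero_or_eq_succ i₀ with h0 | ⟨j, rfl⟩
    · subst h0
      exact ⟨_, by rw [filter_ofFn_ne t hne]⟩
    · have h0 : t 0 = 0 := hz 0 (Fin.succ_pos j)
      rw [filter_ofFn_zero t h0]
      obtain ⟨M, hM⟩ := ih (fun i => t i.succ) j hne
        (fun k hk => hz k.succ (by rwa [Fin.succ_lt_succ_iff]))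
      exact ⟨M, hM⟩

lemma sMinus_tail_zero {n : ℕ} (y : Fin (n+1) → ℝ) (hz : ∀ i : Fin n, y i.succ = 0) :
    sMinus y = 0 := by
  have htail : (List.ofFn (fun i => y i.succ)).filter (fun x => decide (x ≠ 0)) = [] := by
    rw [List.filter_eq_nil_iff]
    intro a ha
    obtain ⟨i, rfl⟩ := List.mem_ofFn.mp ha
    simp [hz i]
  unfold sMinus
  by_cases h : y 0 = 0
  · rw [filter_ofFn_zero y h, htail]; rfl
  · rw [filter_ofFn_ne y h, htail]; rfl

lemma sMinus_ne_first {n : ℕ} (y : Fin (n+1) → ℝ) (h : y 0 ≠ 0) (i₁ : Fin n)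
    (h1 : y i₁.succ ≠ 0) (hz : ∀ j : Fin n, j < i₁ → y j.succ = 0) :
    sMinus y = (if y 0 * y i₁.succ < 0 then 1 else 0) + sMinus (fun i => y i.succ) := by
  obtain ⟨M, hM⟩ := filter_ofFn_first (fun i => y i.succ) i₁ h1 hz
  unfold sMinus
  rw [filter_ofFn_ne y h, hM, csc_cons_cons]

lemma sMinus_eq_zero_of_zero {n : ℕ} (y : Fin n → ℝ) (h : ∀ i, y i = 0) : sMinus y = 0 := by
  have : (List.ofFn y).filter (fun x => decide (x ≠ 0)) = [] := by
    rw [List.filter_eq_nil_iff]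
    intro a ha
    obtain ⟨i, rfl⟩ := List.mem_ofFn.mp ha
    simp [h i]
  unfold sMinus
  rw [this]; rfl

lemma exists_min_nonzero {n : ℕ} (y : Fin n → ℝ) (h : ∃ i, y i ≠ 0) :
    ∃ i₀, y i₀ ≠ 0 ∧ ∀ j, j < i₀ → y j = 0 := by
  obtain ⟨i, hi⟩ := h
  classical
  let F := Finset.univ.filter fun i => y i ≠ 0
  have hFne : F.Nonempty := ⟨i, by simp [F, hi]⟩
  refine ⟨F.min' hFne, ?_, ?_⟩
  · have := Finset.min'_mem F hFne
    simpa [F] using this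
  · intro j hj
    by_contra hjne
    exact absurd (Finset.min'_le F j (by simp [F, hjne])) (not_le.mpr hj)

lemma exists_blocks : ∀ {n : ℕ} (y : Fin n → ℝ), ∃ σ : ℝ, (σ = 1 ∨ σ = -1) ∧ ∃ b : ℕ → ℕ,
    Monotone b ∧ (∀ i : Fin n, b i ≤ sMinus y) ∧
    (∀ i : Fin n, 0 ≤ (-1)^(b (i:ℕ)) * σ * y i) ∧
    (∀ i : Fin n, y i ≠ 0 → (∀ j, j < i → y j = 0) → b (i:ℕ) = 0) := by
  intro n
  induction n with
  | zero =>
    exact fun y => ⟨1, Or.inl rfl, fun _ => 0, monotone_const,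
      fun i => i.elim0, fun i => i.elim0, fun i => i.elim0⟩
  | succ n ih =>
    intro y
    set t : Fin n → ℝ := fun i => y i.succ with ht
    obtain ⟨σ, hσ, b, hbmono, hbbd, hbsign, hbfz⟩ := ih t
    have hσ2 : σ * σ = 1 := by rcases hσ with rfl | rfl <;> norm_num
    by_cases hy0 : y 0 = 0
    · -- prepend 0
      refine ⟨σ, hσ, fun k => match k with | 0 => 0 | (k+1) => b k, ?_, ?_, ?_, ?_⟩
      · apply monotone_nat_of_le_succ
        intro k
        match k with
        | 0 => exact Nat.zero_le _
        | (k+1) => exact hbmono (Nat.le_succ k)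
      · intro i
        rw [sMinus_cons_zero y hy0]
        rcases Fin.eq_zero_or_eq_succ i with rfl | ⟨j, rfl⟩
        · exact Nat.zero_le _
        · simpa [Fin.val_succ] using hbbd j
      · intro i
        rcases Fin.eq_zero_or_eq_succ i with rfl | ⟨j, rfl⟩
        · simp [hy0]
        · simpa [Fin.val_succ] using hbsign j
      · intro i hne hz
        rcases Fin.eq_zero_or_eq_succ i with rfl | ⟨j, rfl⟩
        · exact absurd hy0 hne
        · have : b (j : ℕ) = 0 := hbfz j hne
            (fun k hk => hz k.succ (by rwa [Fin.succ_lt_succ_iff]))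
          simpa [Fin.val_succ] using this
    · by_cases htz : ∀ i : Fin n, t i = 0
      · -- tail all zero
        refine ⟨if 0 ≤ y 0 then 1 else -1, by split <;> simp, fun _ => 0, monotone_const,
          fun i => Nat.zero_le _, ?_, fun _ _ _ => rfl⟩
        intro i
        rcases Fin.eq_zero_or_eq_succ i with rfl | ⟨j, rfl⟩
        · split <;> rename_i h
          · simpa using h
          · push_neg at h
            simp only [pow_zero, one_mul]
            nlinarith
        · simp [show y j.succ = 0 from htz j]
      · push_neg at htz
        obtain ⟨i₁, hi₁ne, hi₁min⟩ := exists_min_nonzero t htz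
        have hb₁ : b (i₁ : ℕ) = 0 := hbfz i₁ hi₁ne hi₁min
        have hσh : 0 < σ * t i₁ := by
          have := hbsign i₁
          rw [hb₁] at this
          simp only [pow_zero, one_mul] at this
          rcases lt_or_eq_of_le this with h | h
          · exact h
          · exfalso
            rcases hσ with rfl | rfl
            · simp at h; exact hi₁ne h.symm
            · exact hi₁ne (by linarith)
        have hsm := sMinus_ne_first y hy0 i₁ hi₁ne hi₁min
        rw [← ht] at hsm
        by_cases hprod : y 0 * t i₁ < 0
        · -- sign flip; shift blocks up by one
          rw [if_pos hprod] at hsm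
          have hσy0 : σ * y 0 < 0 := by
            rcases hσ with rfl | rfl <;> nlinarith
          refine ⟨-σ, by rcases hσ with rfl | rfl <;> simp, 
            fun k => match k with | 0 => 0 | (k+1) => b k + 1, ?_, ?_, ?_, ?_⟩
          · apply monotone_nat_of_le_succ
            intro k
            match k with
            | 0 => exact Nat.zero_le _
            | (k+1) => exact Nat.succ_le_succ (hbmono (Nat.le_succ k))
          · intro i
            rw [hsm]
            rcases Fin.eq_zero_or_eq_succ i with rfl | ⟨j, rfl⟩
            · exact Nat.zero_le _
            · simp only [Fin.val_succ]
              have := hbbd j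
              omega
          · intro i
            rcases Fin.eq_zero_or_eq_succ i with rfl | ⟨j, rfl⟩
            · simp only [Fin.val_zero, pow_zero, one_mul]
              linarith
            · simp only [Fin.val_succ]
              have := hbsign j
              have : (-1:ℝ)^(b (j:ℕ) + 1) * -σ * y j.succ = (-1)^(b (j:ℕ)) * σ * y j.succ := by
                ring
              rw [this]
              exact hbsign j
          · intro i hne hz
            rcases Fin.eq_zero_or_eq_succ i with rfl | ⟨j, rfl⟩
            · rfl
            · exact absurd (hz 0 (Fin.succ_pos j)) hy0
        · -- same sign
          rw [if_neg hprod] at hsm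
          have hσy0 : 0 < σ * y 0 := by
            have hy0h : 0 < y 0 * t i₁ := by
              rcases lt_trichotomy (y 0 * t i₁) 0 with h | h | h
              · exact absurd h hprod
              · exact absurd (mul_eq_zero.mp h) (by push_neg; exact ⟨hy0, hi₁ne⟩)
              · exact h
            nlinarith
          refine ⟨σ, hσ, fun k => match k with | 0 => 0 | (k+1) => b k, ?_, ?_, ?_, ?_⟩
          · apply monotone_nat_of_le_succ
            intro k
            match k with
            | 0 => exact Nat.zero_le _
            | (k+1) => exact hbmono (Nat.le_succ k)
          · intro i
            rw [hsm]
            rcases Fin.eq_zero_or_eq_succ i with rfl | ⟨j, rfl⟩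
            · exact Nat.zero_le _
            · simpa [Fin.val_succ] using hbbd j
          · intro i
            rcases Fin.eq_zero_or_eq_succ i with rfl | ⟨j, rfl⟩
            · simp only [Fin.val_zero, pow_zero, one_mul]
              linarith
            · simpa [Fin.val_succ] using hbsign j
          · intro i hne hz
            rcases Fin.eq_zero_or_eq_succ i with rfl | ⟨j, rfl⟩
            · rfl
            · exact absurd (hz 0 (Fin.succ_pos j)) hy0

lemma exists_alt : ∀ {n : ℕ} (y : Fin n → ℝ) (i₀ : Fin n), y i₀ ≠ 0 →
    (∀ j, j < i₀ → y j = 0) →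
    ∃ σ : ℝ, (σ = 1 ∨ σ = -1) ∧ ∃ r : ℕ → Fin n, r 0 = i₀ ∧
      (∀ a b : ℕ, a < b → b ≤ sMinus y → r a < r b) ∧
      (∀ j : ℕ, j ≤ sMinus y → 0 < (-1)^j * σ * y (r j)) := by
  intro n
  induction n with
  | zero => exact fun y i₀ => i₀.elim0
  | succ n ih =>
    intro y i₀ hne hz
    set t : Fin n → ℝ := fun i => y i.succ with ht
    rcases Fin.eq_zero_or_eq_succ i₀ with rfl | ⟨j₀, rfl⟩
    · by_cases htz : ∀ i : Fin n, t i = 0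
      · -- tail all zero
        have hsm : sMinus y = 0 := sMinus_tail_zero y htz
        refine ⟨if 0 < y 0 then 1 else -1, by split <;> simp, fun _ => 0, rfl, ?_, ?_⟩
        · intro a b hab hb
          rw [hsm] at hb
          omega
        · intro j hj
          rw [hsm] at hj
          interval_cases j
          split <;> rename_i h
          · simpa using h
          · push_neg at h
            have : y 0 < 0 := lt_of_le_of_ne h hne
            simp only [pow_zero, one_mul]
            nlinarith
      · push_neg at htz
        obtain ⟨i₁, hi₁ne, hi₁min⟩ := exists_min_nonzero t htz
        obtain ⟨σ, hσ, r, hr0, hrmono, hralt⟩ := ih t i₁ hi₁ne hi₁min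
        have hσ2 : σ * σ = 1 := by rcases hσ with rfl | rfl <;> norm_num
        have hσh : 0 < σ * t i₁ := by
          have := hralt 0 (Nat.zero_le _)
          rwa [hr0, pow_zero, one_mul] at this
        have hsm := sMinus_ne_first y hne i₁ hi₁ne hi₁min
        rw [← ht] at hsm
        by_cases hprod : y 0 * t i₁ < 0
        · rw [if_pos hprod] at hsm
          have hσy0 : σ * y 0 < 0 := by rcases hσ with rfl | rfl <;> nlinarith
          refine ⟨-σ, by rcases hσ with rfl | rfl <;> simp,
            fun k => match k with | 0 => (0 : Fin (n+1)) | (k+1) => (r k).succ, rfl, ?_, ?_⟩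
          · intro a b hab hb
            rw [hsm] at hb
            match a, b with
            | 0, (b+1) => exact Fin.succ_pos _
            | (a+1), (b+1) =>
              exact Fin.succ_lt_succ_iff.mpr (hrmono a b (by omega) (by omega))
          · intro j hj
            rw [hsm] at hj
            match j with
            | 0 =>
              simp only [pow_zero, one_mul]
              linarith
            | (j+1) =>
              have h1 := hralt j (by omega)
              have h2 : (-1:ℝ)^(j+1) * -σ * y (r j).succ = (-1)^j * σ * y (r j).succ := by ring
              rw [h2]
              exact h1
        · rw [if_neg hprod] at hsm
          have hy0h : 0 < y 0 * t i₁ := by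
            rcases lt_trichotomy (y 0 * t i₁) 0 with h | h | h
            · exact absurd h hprod
            · exact absurd (mul_eq_zero.mp h) (by push_neg; exact ⟨hne, hi₁ne⟩)
            · exact h
          have hσy0 : 0 < σ * y 0 := by nlinarith
          refine ⟨σ, hσ,
            fun k => match k with | 0 => (0 : Fin (n+1)) | (k+1) => (r (k+1)).succ, rfl, ?_, ?_⟩
          · intro a b hab hb
            rw [hsm] at hb
            match a, b with
            | 0, (b+1) => exact Fin.succ_pos _
            | (a+1), (b+1) =>
              exact Fin.succ_lt_succ_iff.mpr (hrmono (a+1) (b+1) (by omega) (by omega))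
          · intro j hj
            rw [hsm] at hj
            match j with
            | 0 =>
              simp only [pow_zero, one_mul]
              linarith
            | (j+1) => exact hralt (j+1) (by omega)
    · -- i₀ = j₀.succ : head is zero
      have h0 : y 0 = 0 := hz 0 (Fin.succ_pos j₀)
      obtain ⟨σ, hσ, r, hr0, hrmono, hralt⟩ := ih t j₀ hne
        (fun k hk => hz k.succ (by rwa [Fin.succ_lt_succ_iff]))
      have hsm := sMinus_cons_zero y h0
      rw [← ht] at hsm
      refine ⟨σ, hσ, fun k => (r k).succ, by simp only []; rw [hr0], ?_, ?_⟩
      · intro a b hab hb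
        rw [hsm] at hb
        exact Fin.succ_lt_succ_iff.mpr (hrmono a b hab hb)
      · intro j hj
        rw [hsm] at hj
        exact hralt j hj

def TNrect {p q : ℕ} (W : Matrix (Fin p) (Fin q) ℝ) : Prop :=
  ∀ (k : ℕ) (r : Fin k → Fin p) (c : Fin k → Fin q), StrictMono r → StrictMono c →
    0 ≤ (W.submatrix r c).det

noncomputable def colApp {N : ℕ} (W : Matrix (Fin (N+1)) (Fin N) ℝ) (z : Fin (N+1) → ℝ) :
    Matrix (Fin (N+1)) (Fin (N+1)) ℝ :=
  Matrix.of fun i => Fin.snoc (W i) (z i)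

lemma colApp_castSucc {N : ℕ} (W : Matrix (Fin (N+1)) (Fin N) ℝ) (z : Fin (N+1) → ℝ)
    (i : Fin (N+1)) (j : Fin N) : colApp W z i j.castSucc = W i j := by
  simp [colApp, Fin.snoc_castSucc]

lemma colApp_last {N : ℕ} (W : Matrix (Fin (N+1)) (Fin N) ℝ) (z : Fin (N+1) → ℝ)
    (i : Fin (N+1)) : colApp W z i (Fin.last N) = z i := by
  simp [colApp]

lemma colApp_minor {N : ℕ} (W : Matrix (Fin (N+1)) (Fin N) ℝ) (z : Fin (N+1) → ℝ)
    (i : Fin (N+1)) :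
    (colApp W z).submatrix i.succAbove (Fin.last N).succAbove = W.submatrix i.succAbove id := by
  funext a b
  simp only [Matrix.submatrix_apply, Fin.succAbove_last, id_eq]
  exact colApp_castSucc W z _ b

lemma colApp_mulVec {N : ℕ} (W : Matrix (Fin (N+1)) (Fin N) ℝ) (z : Fin (N+1) → ℝ)
    (u : Fin N → ℝ) (a : ℝ) :
    colApp W z *ᵥ (Fin.snoc u a) = W *ᵥ u + a • z := by
  funext i
  simp only [Matrix.mulVec, dotProduct, Pi.add_apply, Pi.smul_apply, smul_eq_mul]
  rw [Fin.sum_univ_castSucc]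
  simp only [Fin.snoc_castSucc, Fin.snoc_last, colApp_last]
  congr 1
  · apply Finset.sum_congr rfl
    intro j _
    rw [colApp_castSucc]
  · ring

lemma colApp_det {N : ℕ} (W : Matrix (Fin (N+1)) (Fin N) ℝ) (z : Fin (N+1) → ℝ) :
    (colApp W z).det = ∑ i : Fin (N+1),
      (-1)^((i:ℕ) + N) * z i * (W.submatrix i.succAbove id).det := by
  rw [Matrix.det_succ_column (colApp W z) (Fin.last N)]
  apply Finset.sum_congr rfl
  intro i _
  rw [colApp_minor, colApp_last]
  simp [Fin.val_last]

lemma mulVec_mem_span {N M : ℕ} (W : Matrix (Fin N) (Fin M) ℝ) (u : Fin M → ℝ) :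
    W *ᵥ u ∈ Submodule.span ℝ (Set.range fun j i => W i j) := by
  have : W *ᵥ u = ∑ j, u j • (fun i => W i j) := by
    funext i
    simp only [Matrix.mulVec, dotProduct, Finset.sum_apply, Pi.smul_apply, smul_eq_mul]
    apply Finset.sum_congr rfl
    intro j _
    ring
  rw [this]
  exact Submodule.sum_mem _ fun j _ =>
    Submodule.smul_mem _ _ (Submodule.subset_span ⟨j, rfl⟩)

lemma exists_kernel_of_minors {N : ℕ} (W : Matrix (Fin (N+1)) (Fin N) ℝ)
    (hM : ∀ i : Fin (N+1), (W.submatrix i.succAbove id).det = 0) :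
    ∃ g : Fin N → ℝ, g ≠ 0 ∧ W *ᵥ g = 0 := by
  classical
  set S := Submodule.span ℝ (Set.range fun j i => W i j) with hS
  -- span is not everything
  have hrank : Module.finrank ℝ S ≤ N := by
    have h1 : Module.finrank ℝ S ≤ (Set.range fun j i => W i j).toFinset.card :=
      finrank_span_le_card _
    have h2 : (Set.range fun j i => W i j).toFinset.card ≤ N := by
      rw [Set.toFinset_card]
      exact (Fintype.card_range_le _).trans (by simp)
    omega
  have hStop : S ≠ ⊤ := by
    intro h
    rw [h] at hrank
    have : Module.finrank ℝ (⊤ : Submodule ℝ (Fin (N+1) → ℝ)) = N + 1 := by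
      rw [finrank_top, Module.finrank_pi]
      simp
    omega
  have hex : ∃ i₀ : Fin (N+1), (Pi.single i₀ (1:ℝ) : Fin (N+1) → ℝ) ∉ S := by
    by_contra h
    push_neg at h
    apply hStop
    rw [eq_top_iff]
    intro f _
    have : f = ∑ i, f i • (Pi.single i (1:ℝ) : Fin (N+1) → ℝ) := by
      funext j
      simp only [Finset.sum_apply, Pi.smul_apply, smul_eq_mul]
      rw [Finset.sum_eq_single j]
      · simp
      · intro i _ hij
        simp [Pi.single_apply, Ne.symm hij]
      · simp
    rw [this]
    exact Submodule.sum_mem _ fun i _ => Submodule.smul_mem _ _ (h i)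
  obtain ⟨i₀, hi₀⟩ := hex
  set z : Fin (N+1) → ℝ := (Pi.single i₀ (1:ℝ) : Fin (N+1) → ℝ) with hz
  have hdet : (colApp W z).det = 0 := by
    rw [colApp_det]
    apply Finset.sum_eq_zero
    intro i _
    rw [hM i]
    ring
  obtain ⟨v, hvne, hv0⟩ := (Matrix.exists_mulVec_eq_zero_iff).mpr hdet
  have hvsnoc : v = Fin.snoc (Fin.init v) (v (Fin.last N)) := (Fin.snoc_init_self v).symm
  rw [hvsnoc, colApp_mulVec] at hv0
  by_cases ha : v (Fin.last N) = 0
  · refine ⟨Fin.init v, ?_, ?_⟩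
    · intro h
      apply hvne
      rw [hvsnoc, h, ha]
      funext j
      rcases Fin.eq_castSucc_or_eq_last j with ⟨j', rfl⟩ | rfl
      · simp [Fin.snoc_castSucc]
      · simp
    · rw [ha] at hv0
      simpa using hv0
  · exfalso
    apply hi₀
    have : z = (-(v (Fin.last N))⁻¹) • (W *ᵥ Fin.init v) := by
      have := hv0
      field_simp
      funext i
      have h1 := congrFun hv0 i
      simp only [Pi.add_apply, Pi.smul_apply, smul_eq_mul, Pi.zero_apply] at h1 ⊢
      field_simp at h1 ⊢
      linarith [h1]
    rw [hS, this]
    exact Submodule.smul_mem _ _ (mulVec_mem_span W (Fin.init v))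

lemma tn_core : ∀ (m : ℕ) (W : Matrix (Fin (m+1)) (Fin m) ℝ), TNrect W →
    ∀ (c : Fin m → ℝ) (σ : ℝ), (σ = 1 ∨ σ = -1) →
    (∀ i : Fin (m+1), 0 < (-1)^(i:ℕ) * σ * (W *ᵥ c) i) → False := by
  intro m
  induction m with
  | zero =>
    intro W _ c σ _ halt
    have h0 : (W *ᵥ c) 0 = 0 := by
      simp [Matrix.mulVec, dotProduct]
    have := halt 0
    rw [h0] at this
    simp at this
  | succ m ih =>
    intro W hW c σ hσ halt
    set y : Fin ((m+1)+1) → ℝ := W *ᵥ c with hy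
    have hσ2 : σ * σ = 1 := by rcases hσ with rfl | rfl <;> norm_num
    -- step 1 : det (colApp W y) = 0
    have hdet0 : (colApp W y).det = 0 := by
      rw [← Matrix.exists_mulVec_eq_zero_iff]
      refine ⟨Fin.snoc c (-1), ?_, ?_⟩
      · intro h
        have := congrFun h (Fin.last (m+1))
        simp at this
      · rw [colApp_mulVec]
        funext i
        simp [hy]
    -- step 2+3 : all maximal minors vanish
    have hMnn : ∀ i : Fin ((m+1)+1), 0 ≤ (W.submatrix i.succAbove id).det := fun i =>
      hW (m+1) i.succAbove id (Fin.strictMono_succAbove i) strictMono_id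
    have hsum : ∑ i : Fin ((m+1)+1), ((-1)^(i:ℕ) * σ * y i) * (W.submatrix i.succAbove id).det = 0 := by
      have h1 : (colApp W y).det =
          (-1)^(m+1) * σ * ∑ i : Fin ((m+1)+1), ((-1)^(i:ℕ) * σ * y i) * (W.submatrix i.succAbove id).det := by
        rw [colApp_det, Finset.mul_sum]
        apply Finset.sum_congr rfl
        intro i _
        have : (-1:ℝ)^((i:ℕ) + (m+1)) = (-1)^(i:ℕ) * (-1)^(m+1) := pow_add _ _ _
        rw [this]
        linear_combination (-((-1:ℝ)^(i:ℕ) * (-1)^(m+1) * y i * (W.submatrix i.succAbove id).det)) * hσ2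
      have hne : ((-1:ℝ)^(m+1) * σ) ≠ 0 := by
        rcases hσ with rfl | rfl <;> simp [pow_ne_zero]
      rw [hdet0] at h1
      rcases mul_eq_zero.mp h1.symm with h | h
      · exact absurd h hne
      · exact h
    have hM0 : ∀ i : Fin ((m+1)+1), (W.submatrix i.succAbove id).det = 0 := by
      intro i
      have := (Finset.sum_eq_zero_iff_of_nonneg (fun (i : Fin (m+1+1)) (_ : i ∈ Finset.univ) =>
          mul_nonneg (le_of_lt (halt i)) (hMnn i))).mp hsum i (Finset.mem_univ i)
      rcases mul_eq_zero.mp this with h | h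
      · exact absurd h (ne_of_gt (halt i))
      · exact h
    -- step 4 : kernel vector
    obtain ⟨g, hgne, hgker⟩ := exists_kernel_of_minors W hM0
    have hgj : ∃ j₀, g j₀ ≠ 0 := by
      by_contra h
      push_neg at h
      exact hgne (funext h)
    obtain ⟨j₀, hj₀⟩ := hgj
    -- step 5 : descent
    set c' : Fin (m+1) → ℝ := c - (c j₀ / g j₀) • g with hc'
    have hWc' : W *ᵥ c' = y := by
      rw [hc', Matrix.mulVec_sub, Matrix.mulVec_smul, hgker]
      simp [hy]
    have hc'j₀ : c' j₀ = 0 := by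
      simp only [hc', Pi.sub_apply, Pi.smul_apply, smul_eq_mul]
      field_simp
      ring
    set W'' : Matrix (Fin (m+1)) (Fin m) ℝ := W.submatrix Fin.castSucc j₀.succAbove with hW''
    have hTN'' : TNrect W'' := by
      intro k ρ γ hρ hγ
      rw [hW'', Matrix.submatrix_submatrix]
      exact hW k _ _ (Fin.strictMono_castSucc.comp hρ) ((Fin.strictMono_succAbove j₀).comp hγ)
    apply ih W'' hTN'' (fun j => c' (j₀.succAbove j)) σ hσ
    intro i
    have hval : (W'' *ᵥ fun j => c' (j₀.succAbove j)) i = y i.castSucc := by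
      rw [← hWc']
      simp only [hW'', Matrix.mulVec, dotProduct, Matrix.submatrix_apply]
      rw [Fin.sum_univ_succAbove (fun j => W i.castSucc j * c' j) j₀]
      rw [hc'j₀]
      ring
    rw [hval]
    have := halt i.castSucc
    rwa [Fin.coe_castSucc] at this

lemma tn_mul_blocks {n M : ℕ} (A : Matrix (Fin n) (Fin n) ℝ) (hA : TotallyNonneg A)
    (bh : Fin n → Fin M) (hbh : Monotone bh) (v : Fin n → ℝ) (hv : ∀ i, 0 ≤ v i) :
    TNrect (A * (Matrix.of fun i j => if bh i = j then v i else 0)) := by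
  intro s R γ hR hγ
  set V : Matrix (Fin n) (Fin M) ℝ := Matrix.of (fun i j => if bh i = j then v i else 0) with hV
  rw [← Matrix.det_transpose]
  have hrows : ((A * V).submatrix R γ)ᵀ =
      fun q => ∑ i ∈ Finset.univ.filter (fun i => bh i = γ q), v i • (fun p => A (R p) i) := by
    funext q p
    simp only [Matrix.transpose_apply, Matrix.submatrix_apply, Matrix.mul_apply, hV,
      Matrix.of_apply, Finset.sum_apply, Pi.smul_apply, smul_eq_mul]
    rw [Finset.sum_filter]
    apply Finset.sum_congr rfl
    intro i _
    split <;> ring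
  have hdet : (((A * V).submatrix R γ)ᵀ).det =
      (Matrix.detRowAlternating : (Fin s → ℝ) [⋀^Fin s]→ₗ[ℝ] ℝ).toMultilinearMap
        (((A * V).submatrix R γ)ᵀ) := rfl
  rw [hdet, hrows]
  rw [MultilinearMap.map_sum_finset]
  apply Finset.sum_nonneg
  intro r hr
  have hmem : ∀ q, bh (r q) = γ q := by
    intro q
    have := (Fintype.mem_piFinset.mp hr) q
    simpa using this
  have hrmono : StrictMono (fun q => r q) := by
    intro q q' hqq'
    have hγlt : γ q < γ q' := hγ hqq'
    by_contra hc
    push_neg at hc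
    have : bh (r q') ≤ bh (r q) := hbh hc
    rw [hmem q, hmem q'] at this
    exact absurd hγlt (not_lt.mpr this)
  rw [MultilinearMap.map_smul_univ]
  have hterm : (Matrix.detRowAlternating : (Fin s → ℝ) [⋀^Fin s]→ₗ[ℝ] ℝ).toMultilinearMap
      (fun q => (fun p => A (R p) (r q))) = ((A.submatrix R (fun q => r q))ᵀ).det := rfl
  rw [hterm, Matrix.det_transpose, smul_eq_mul]
  exact mul_nonneg (Finset.prod_nonneg fun q _ => hv (r q)) (hA s R _ hR hrmono)


theorem tn_sMinus_svdp {n : ℕ} (A : Matrix (Fin n) (Fin n) ℝ)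
    (hA : TotallyNonneg A) :
    ∀ x : Fin n → ℝ, sMinus (A.mulVec x) ≤ sMinus x := by
  intro x
  by_contra hcon
  push_neg at hcon
  set k := sMinus x with hk
  set y : Fin n → ℝ := A.mulVec x with hy
  have hky : k + 1 ≤ sMinus y := hcon
  have hex : ∃ i, y i ≠ 0 := by
    by_contra h
    push_neg at h
    have := sMinus_eq_zero_of_zero y h
    omega
  obtain ⟨i₀, hi₀ne, hi₀min⟩ := exists_min_nonzero y hex
  obtain ⟨σ, hσ, r, hr0, hrmono, hralt⟩ := exists_alt y i₀ hi₀ne hi₀min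
  obtain ⟨σ', hσ', b, hbmono, hbbd, hbsign, _⟩ := exists_blocks x
  have hσ'2 : σ' * σ' = 1 := by rcases hσ' with rfl | rfl <;> norm_num
  set bh : Fin n → Fin (k+1) := fun i => ⟨b (i:ℕ), Nat.lt_succ_of_le (hbbd i)⟩ with hbh
  set v : Fin n → ℝ := fun i => (-1)^(b (i:ℕ)) * σ' * x i with hv
  have hvnn : ∀ i, 0 ≤ v i := fun i => hbsign i
  have hbhmono : Monotone bh := by
    intro i j hij
    simp only [hbh, Fin.mk_le_mk]
    exact hbmono (by exact_mod_cast hij)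
  set V : Matrix (Fin n) (Fin (k+1)) ℝ :=
    Matrix.of (fun i j => if bh i = j then v i else 0) with hV
  set c : Fin (k+1) → ℝ := fun j => (-1)^(j:ℕ) * σ' with hc
  have hVc : V *ᵥ c = x := by
    funext i
    simp only [Matrix.mulVec, dotProduct, hV, Matrix.of_apply]
    rw [Finset.sum_eq_single (bh i)]
    · rw [if_pos rfl]
      have hcb : c (bh i) = (-1)^(b (i:ℕ)) * σ' := by
        simp only [hc]
        rfl
      rw [hcb]
      have hpow : (-1:ℝ)^(b (i:ℕ)) * (-1)^(b (i:ℕ)) = 1 := by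
        rw [← mul_pow]; norm_num
      calc ((-1:ℝ)^(b (i:ℕ)) * σ' * x i) * ((-1)^(b (i:ℕ)) * σ')
          = ((-1:ℝ)^(b (i:ℕ)) * (-1)^(b (i:ℕ))) * (σ' * σ') * x i := by ring
        _ = x i := by rw [hpow, hσ'2]; ring
    · intro j _ hj
      rw [if_neg (fun h => hj h.symm)]
      ring
    · intro h
      exact absurd (Finset.mem_univ _) h
  set r' : Fin (k+2) → Fin n := fun j => r (j : ℕ) with hr'
  have hr'mono : StrictMono r' := by
    intro a b' hab
    exact hrmono (a:ℕ) (b':ℕ) (by exact_mod_cast hab)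
      ((Nat.lt_succ_iff.mp b'.isLt).trans hky)
  have hTNAV : TNrect (A * V) := tn_mul_blocks A hA bh hbhmono v hvnn
  set W : Matrix (Fin (k+2)) (Fin (k+1)) ℝ := (A * V).submatrix r' id with hW
  have hWTN : TNrect W := by
    intro s ρ γ hρ hγ
    rw [hW, Matrix.submatrix_submatrix]
    have hid : (id ∘ γ) = γ := rfl
    rw [hid]
    exact hTNAV s (r' ∘ ρ) γ (hr'mono.comp hρ) hγ
  have hWc : W *ᵥ c = fun j => y (r' j) := by
    funext j
    have h1 : (W *ᵥ c) j = ((A * V) *ᵥ c) (r' j) := rfl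
    rw [h1, ← Matrix.mulVec_mulVec, hVc, ← hy]
  apply tn_core (k+1) W hWTN c σ hσ
  intro i
  rw [congrFun hWc i]
  exact hralt (i:ℕ) ((Nat.lt_succ_iff.mp i.isLt).trans hky)
end

section
/- Let J be a constant n×n tridiagonal matrix with strictly positive entries on the superdiagonal and subdiagonal. Then there exists ε̄ > 0 such that for all ε ∈ (0, ε̄), the matrix exp(Jε) is nonsingular, totally nonnegative, and irreducible; hence (exp(Jε))^{n-1} is totally positive. -/
open scoped Classical

open Matrix NormedSpace

theorem hasDerivAt_exp_entry {ι : Type*} [Fintype ι] [DecidableEq ι] (A : Matrix ι ι ℝ)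
    (t : ℝ) (i j : ι) :
    HasDerivAt (fun s : ℝ => exp (s • A) i j) ((A * exp (t • A)) i j) t := by
  letI : NormedRing (Matrix ι ι ℝ) := Matrix.linftyOpNormedRing
  letI : NormedAlgebra ℝ (Matrix ι ι ℝ) := Matrix.linftyOpNormedAlgebra
  have h := hasDerivAt_exp_smul_const' (𝕂 := ℝ) A t
  let L : Matrix ι ι ℝ →ₗ[ℝ] ℝ :=
    { toFun := fun M => M i j
      map_add' := fun _ _ => rfl
      map_smul' := fun _ _ => rfl }
  have hL := (LinearMap.toContinuousLinearMap L).hasFDerivAt (x := exp (t • A))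
  have := hL.comp_hasDerivAt t h
  exact this

theorem hasDerivAt_det {k : ℕ} {A : ℝ → Matrix (Fin k) (Fin k) ℝ}
    {A' : Matrix (Fin k) (Fin k) ℝ} {t : ℝ}
    (h : ∀ i j, HasDerivAt (fun s => A s i j) (A' i j) t) :
    HasDerivAt (fun s => (A s).det)
      (∑ i, (Matrix.updateRow (A t) i (A' i)).det) t := by
  simp only [Matrix.det_apply']
  have hterm : ∀ σ : Equiv.Perm (Fin k),
      HasDerivAt (fun s => (Equiv.Perm.sign σ : ℝ) * ∏ i, A s (σ i) i)
        ((Equiv.Perm.sign σ : ℝ) *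
          ∑ i, (∏ j ∈ Finset.univ.erase i, A t (σ j) j) * A' (σ i) i) t := by
    intro σ
    have hp : HasDerivAt (fun s => ∏ i, A s (σ i) i)
        (∑ i, (∏ j ∈ Finset.univ.erase i, A t (σ j) j) • A' (σ i) i) t := by
      exact HasDerivAt.fun_finsetProd (fun i _ => h (σ i) i)
    simpa [smul_eq_mul] using hp.const_mul ((Equiv.Perm.sign σ : ℝ))
  have H := HasDerivAt.fun_sum (u := Finset.univ) (fun σ _ => hterm σ)
  convert H using 1
  · rfl
  · rfl
  rw [Finset.sum_comm]
  refine Finset.sum_congr rfl fun σ _ => ?_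
  rw [Finset.mul_sum]
  -- LHS: ∑ x, sign σ * ∏ i, updateRow (A t) x (A' x) (σ i) i
  -- RHS: ∑ i, sign σ * ((∏ j ∈ erase i, A t (σ j) j) * A' (σ i) i)
  rw [← Equiv.sum_comp σ (fun x => (Equiv.Perm.sign σ : ℝ) *
      ∏ i, (A t).updateRow x (A' x) (σ i) i)]
  refine Finset.sum_congr rfl fun i0 _ => ?_
  congr 1
  have hupd : ∀ i : Fin k, (A t).updateRow (σ i0) (A' (σ i0)) (σ i) i
      = if i = i0 then A' (σ i0) i else A t (σ i) i := by
    intro i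
    by_cases hi : i = i0
    · subst hi; simp [Matrix.updateRow_self]
    · rw [Matrix.updateRow_ne (fun hc => hi (σ.injective hc))]
      simp [hi]
  simp only [hupd]
  rw [← Finset.mul_prod_erase Finset.univ _ (Finset.mem_univ i0)]
  rw [if_pos rfl, mul_comm]
  congr 1
  exact Finset.prod_congr rfl fun j hj => by
    rw [if_neg (Finset.ne_of_mem_erase hj)]

-- multilinearity helper
theorem det_updateRow_fn_sum {k : ℕ} (M : Matrix (Fin k) (Fin k) ℝ) (i : Fin k)
    {ι : Type*} (s : Finset ι) (v : ι → Fin k → ℝ) :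
    (M.updateRow i (∑ l ∈ s, v l)).det = ∑ l ∈ s, (M.updateRow i (v l)).det := by
  classical
  induction s using Finset.induction_on with
  | empty =>
      simp only [Finset.sum_empty]
      exact Matrix.det_eq_zero_of_row_eq_zero i (fun j => by simp)
  | insert _ _ hx ih =>
      rw [Finset.sum_insert hx, Matrix.det_updateRow_add, ih, Finset.sum_insert hx]

-- val bound for strict monotone maps into Fin
theorem strictMono_val_le {k n : ℕ} {r : Fin k → Fin n} (hr : StrictMono r) :
    ∀ i : Fin k, i.val ≤ (r i).val := by
  intro i
  obtain ⟨m, hi⟩ : ∃ m, i.val = m := ⟨i.val, rfl⟩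
  induction m generalizing i with
  | zero => rw [hi]; exact Nat.zero_le _
  | succ m ih =>
      have hm : m < k := lt_trans (hi ▸ m.lt_succ_self) i.isLt
      have h1 : (r ⟨m, hm⟩).val < (r i).val := by
        apply hr
        simp [Fin.lt_def, hi]
      have h2 := ih ⟨m, hm⟩ rfl
      have h3 : (⟨m, hm⟩ : Fin k).val = m := rfl
      omega

section Compound
variable {n : ℕ}

def Ix (n k : ℕ) := {s : Finset (Fin n) // s.card = k}

instance {k : ℕ} : Fintype (Ix n k) := Subtype.fintype _
instance {k : ℕ} : DecidableEq (Ix n k) := Subtype.instDecidableEq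

def enum {k : ℕ} (S : Ix n k) : Fin k → Fin n := S.1.orderEmbOfFin S.2

theorem enum_strictMono {k : ℕ} (S : Ix n k) : StrictMono (enum S) :=
  (S.1.orderEmbOfFin S.2).strictMono

theorem enum_mem {k : ℕ} (S : Ix n k) (i : Fin k) : enum S i ∈ S.1 :=
  Finset.orderEmbOfFin_mem _ _ _

theorem mem_range_enum {k : ℕ} (S : Ix n k) (x : Fin n) (hx : x ∈ S.1) :
    ∃ i, enum S i = x := by
  have : x ∈ Set.range (enum S) := by rw [enum, Finset.range_orderEmbOfFin]; exact hx
  exact this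

def moveSet {k : ℕ} (S : Ix n k) (i : Fin k) (l : Fin n) : Finset (Fin n) :=
  insert l (S.1.erase (enum S i))

theorem moveSet_card {k : ℕ} (S : Ix n k) (i : Fin k) (l : Fin n)
    (h : l = enum S i ∨ l ∉ S.1) : (moveSet S i l).card = k := by
  rcases h with h | h
  · subst h
    rw [moveSet, Finset.insert_erase (enum_mem S i), S.2]
  · have hl : l ∉ S.1.erase (enum S i) := fun hc => h (Finset.mem_of_mem_erase hc)
    rw [moveSet, Finset.card_insert_of_notMem hl, Finset.card_erase_of_mem (enum_mem S i), S.2]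
    have : 0 < k := S.2 ▸ Finset.card_pos.2 ⟨_, enum_mem S i⟩
    omega

def move {k : ℕ} (S : Ix n k) (i : Fin k) (l : Fin n)
    (h : l = enum S i ∨ l ∉ S.1) : Ix n k := ⟨moveSet S i l, moveSet_card S i l h⟩

/-- The additive compound matrix. -/
noncomputable def Jc (J : Matrix (Fin n) (Fin n) ℝ) (k : ℕ) : Matrix (Ix n k) (Ix n k) ℝ :=
  Matrix.of fun S T => ∑ i : Fin k, ∑ l : Fin n,
    if (l = enum S i ∨ l ∉ S.1) ∧ T.1 = moveSet S i l then J (enum S i) l else 0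

/-- The compound (minor) matrix of `exp (t • J)`. -/
noncomputable def Gm (J : Matrix (Fin n) (Fin n) ℝ) (k : ℕ) (t : ℝ) :
    Matrix (Ix n k) (Ix n k) ℝ :=
  Matrix.of fun S T => ((exp (t • J)).submatrix (enum S) (enum T)).det

theorem strictMono_update {k : ℕ} {r : Fin k → Fin n} (hr : StrictMono r) (i : Fin k)
    (l : Fin n) (hl : ∀ a, r a ≠ l)
    (hadj : l.val = (r i).val + 1 ∨ (r i).val = l.val + 1) :
    StrictMono (Function.update r i l) := by
  intro a b hab
  have hfl : ∀ a b : Fin k, a < b → ((r a).val < (r b).val) := fun a b h => hr h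
  have hne : ∀ a, (r a).val ≠ l.val := fun a hc => hl a (Fin.ext hc)
  rcases eq_or_ne a i with rfl | ha
  · rw [Function.update_self, Function.update_of_ne (ne_of_gt hab)]
    have h1 := hfl _ _ hab
    have h2 := hne b
    exact Fin.lt_def.2 (by omega)
  · rw [Function.update_of_ne ha]
    rcases eq_or_ne b i with rfl | hb
    · rw [Function.update_self]
      have h1 := hfl _ _ hab
      have h2 := hne a
      exact Fin.lt_def.2 (by omega)
    · rw [Function.update_of_ne hb]; exact hr hab

theorem enum_move {k : ℕ} (S : Ix n k) (i : Fin k) (l : Fin n)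
    (hl : l ∉ S.1) (hadj : l.val = (enum S i).val + 1 ∨ (enum S i).val = l.val + 1) :
    enum (move S i l (Or.inr hl)) = Function.update (enum S) i l := by
  have hmono : StrictMono (Function.update (enum S) i l) :=
    strictMono_update (enum_strictMono S) i l (fun a hc => hl (hc ▸ enum_mem S a)) hadj
  have hmem : ∀ a, Function.update (enum S) i l a ∈ moveSet S i l := by
    intro a
    rcases eq_or_ne a i with rfl | ha
    · rw [Function.update_self]; exact Finset.mem_insert_self _ _
    · rw [Function.update_of_ne ha]
      exact Finset.mem_insert_of_mem (Finset.mem_erase.2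
        ⟨fun hc => ha ((enum_strictMono S).injective hc), enum_mem S a⟩)
  exact ((Finset.orderEmbOfFin_unique (moveSet_card S i l (Or.inr hl)) hmem hmono)).symm

end Compound

theorem hasDerivAt_Gm {n : ℕ} (J : Matrix (Fin n) (Fin n) ℝ)
    (htri : ∀ i j : Fin n, (i.val + 1 < j.val ∨ j.val + 1 < i.val) → J i j = 0)
    (k : ℕ) (t : ℝ) (S T : Ix n k) :
    HasDerivAt (fun s => Gm J k s S T) ((Jc J k * Gm J k t) S T) t := by
  set r := enum S with hrdef
  set c := enum T with hcdef
  set E := exp (t • J) with hEdef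
  set M := E.submatrix r c with hMdef
  have hd := hasDerivAt_det (A := fun s => (exp (s • J)).submatrix r c)
      (A' := (J * E).submatrix r c) (t := t)
      (fun i j => hasDerivAt_exp_entry J t (r i) (c j))
  have hstep1 : ∀ i : Fin k,
      (M.updateRow i (((J * E).submatrix r c) i)).det
        = ∑ l : Fin n, J (r i) l * (M.updateRow i (fun j => E l (c j))).det := by
    intro i
    have hrow : ((J * E).submatrix r c) i
        = ∑ l : Fin n, (J (r i) l) • (fun j => E l (c j)) := by
      funext j
      simp [Matrix.mul_apply, Finset.sum_apply]
    rw [hrow, det_updateRow_fn_sum]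
    exact Finset.sum_congr rfl fun l _ => Matrix.det_updateRow_smul M i (J (r i) l) _
  have hstep2 : ∀ (i : Fin k) (l : Fin n),
      J (r i) l * (M.updateRow i (fun j => E l (c j))).det
        = ∑ T' : Ix n k, if (l = r i ∨ l ∉ S.1) ∧ T'.1 = moveSet S i l
            then J (r i) l * Gm J k t T' T else 0 := by
    intro i l
    by_cases hC : l = r i ∨ l ∉ S.1
    · have hiff : ∀ T' : Ix n k,
          (((l = r i ∨ l ∉ S.1) ∧ T'.1 = moveSet S i l)) ↔ T' = move S i l hC :=
        fun T' => ⟨fun h => Subtype.ext h.2, fun h => ⟨hC, by rw [h]; rfl⟩⟩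
      simp only [hiff]
      rw [Finset.sum_ite_eq' Finset.univ (move S i l hC)
        (fun T' => J (r i) l * Gm J k t T' T), if_pos (Finset.mem_univ _)]
      rcases hC with hCe | hCn
      · -- l is the current element : diagonal term
        subst hCe
        have hmv : ∀ (h : r i = r i ∨ r i ∉ S.1), move S i (r i) h = S :=
          fun _ => Subtype.ext (Finset.insert_erase (enum_mem S i))
        have hrow_eq : (fun j => E (r i) (c j)) = M i := rfl
        rw [hrow_eq, Matrix.updateRow_eq_self, hmv]
        rfl
      · -- l outside S
        by_cases hadj : l.val = (r i).val + 1 ∨ (r i).val = l.val + 1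
        · congr 1
          have he := enum_move S i l hCn hadj
          have hupd : M.updateRow i (fun j => E l (c j))
              = E.submatrix (Function.update r i l) c := by
            ext a j
            rcases eq_or_ne a i with rfl | ha
            · simp [Matrix.updateRow_self, Function.update_self]
            · simp [Matrix.updateRow_ne ha, Function.update_of_ne ha, hMdef]
          rw [hupd]
          show (E.submatrix (Function.update r i l) c).det
              = ((exp (t • J)).submatrix (enum (move S i l (Or.inr hCn))) (enum T)).det
          rw [he, ← hEdef, ← hcdef]
        · -- far term : J vanishes
          have hne : l ≠ r i := fun hc => hCn (hc ▸ enum_mem S i)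
          have hJ0 : J (r i) l = 0 := by
            apply htri
            have : l.val ≠ (r i).val := fun hc => hne (Fin.ext hc)
            omega
          rw [hJ0, zero_mul, zero_mul]
    · -- l already in S (and not the moved one) : zero on both sides
      rw [not_or, not_not] at hC
      obtain ⟨hlr, hlS⟩ := hC
      obtain ⟨i', hi'⟩ : ∃ i', r i' = l := by
        have : l ∈ Set.range r := by
          rw [hrdef, enum, Finset.range_orderEmbOfFin]; exact hlS
        exact this
      have hii' : i ≠ i' := fun hc => hlr (by rw [hc, hi'])
      have hD : (M.updateRow i fun j => E l (c j)).det = 0 := by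
        apply Matrix.det_zero_of_row_eq hii'
        funext j
        rw [Matrix.updateRow_self, Matrix.updateRow_ne (Ne.symm hii')]
        rw [hMdef]
        simp [hi']
      rw [hD, mul_zero]
      symm
      apply Finset.sum_eq_zero
      intro T' _
      rw [if_neg]
      intro hcontra
      rcases hcontra.1 with h | h
      · exact hlr h
      · exact h hlS
  have hval : (∑ i, (M.updateRow i (((J * E).submatrix r c) i)).det)
      = (Jc J k * Gm J k t) S T := by
    rw [Finset.sum_congr rfl fun i _ => hstep1 i]
    rw [Finset.sum_congr rfl fun i _ => Finset.sum_congr rfl fun l _ => hstep2 i l]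
    rw [Matrix.mul_apply]
    have hrhs : ∀ T' : Ix n k, Jc J k S T' * Gm J k t T' T
        = ∑ i : Fin k, ∑ l : Fin n,
            if (l = r i ∨ l ∉ S.1) ∧ T'.1 = moveSet S i l
              then J (r i) l * Gm J k t T' T else 0 := by
      intro T'
      rw [Jc, Matrix.of_apply, Finset.sum_mul]
      exact Finset.sum_congr rfl fun i _ => by
        rw [Finset.sum_mul]
        exact Finset.sum_congr rfl fun l _ => by rw [ite_mul, zero_mul]
    rw [Finset.sum_congr rfl fun T' _ => hrhs T']
    exact Eq.symm (Finset.sum_comm.trans (Finset.sum_congr rfl fun i _ => Finset.sum_comm))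
  rw [hval] at hd
  exact hd

theorem Gm_zero {n : ℕ} (J : Matrix (Fin n) (Fin n) ℝ) (k : ℕ) :
    Gm J k 0 = 1 := by
  ext S T
  show ((exp ((0:ℝ) • J)).submatrix (enum S) (enum T)).det = (1 : Matrix (Ix n k) (Ix n k) ℝ) S T
  rw [zero_smul, exp_zero]
  rcases eq_or_ne S T with rfl | hST
  · have hsub : (1 : Matrix (Fin n) (Fin n) ℝ).submatrix (enum S) (enum S)
        = (1 : Matrix (Fin k) (Fin k) ℝ) := by
      ext i j
      rcases eq_or_ne i j with rfl | hij
      · simp [Matrix.one_apply]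
      · rw [Matrix.submatrix_apply,
          Matrix.one_apply_ne (fun hc => hij ((enum_strictMono S).injective hc)),
          Matrix.one_apply_ne hij]
    rw [hsub, Matrix.det_one, Matrix.one_apply_eq]
  · obtain ⟨x, hxS, hxT⟩ : ∃ x ∈ S.1, x ∉ T.1 := by
      by_contra hc
      push_neg at hc
      exact hST (Subtype.ext (Finset.eq_of_subset_of_card_le hc (by rw [S.2, T.2])))
    obtain ⟨i, hi⟩ : ∃ i, enum S i = x := by
      have : x ∈ Set.range (enum S) := by rw [enum, Finset.range_orderEmbOfFin]; exact hxS
      exact this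
    rw [Matrix.one_apply_ne hST]
    apply Matrix.det_eq_zero_of_row_eq_zero i
    intro j
    rw [Matrix.submatrix_apply, Matrix.one_apply_ne]
    intro hc
    rw [hi] at hc
    exact hxT (hc ▸ enum_mem T j)

theorem Gm_eq_exp {n : ℕ} (J : Matrix (Fin n) (Fin n) ℝ)
    (htri : ∀ i j : Fin n, (i.val + 1 < j.val ∨ j.val + 1 < i.val) → J i j = 0)
    (k : ℕ) (t : ℝ) :
    Gm J k t = exp (t • Jc J k) := by
  set K := Jc J k with hK
  have hcomm : ∀ s : ℝ, (exp (s • (-K))) * K = K * exp (s • (-K)) := by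
    intro s
    have : Commute (s • (-K)) K := ((Commute.refl K).neg_left.smul_left s)
    exact this.exp_left
  have key : ∀ S T : Ix n k, ∀ s : ℝ,
      (exp (s • (-K)) * Gm J k s) S T = (exp ((0:ℝ) • (-K)) * Gm J k 0) S T := by
    intro S T
    have hdiff : ∀ s : ℝ, HasDerivAt (fun u => (exp (u • (-K)) * Gm J k u) S T) 0 s := by
      intro s
      have hterm : ∀ U : Ix n k, HasDerivAt
          (fun u => exp (u • (-K)) S U * Gm J k u U T)
          ((((-K) * exp (s • (-K))) S U) * Gm J k s U T
            + exp (s • (-K)) S U * ((K * Gm J k s) U T)) s := by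
        intro U
        exact (hasDerivAt_exp_entry (-K) s S U).mul (hasDerivAt_Gm J htri k s U T)
      have hsum := HasDerivAt.fun_sum (u := Finset.univ) (fun U _ => hterm U)
      have hfun : (fun u => (exp (u • (-K)) * Gm J k u) S T)
          = fun u => ∑ U : Ix n k, exp (u • (-K)) S U * Gm J k u U T := by
        funext u; rw [Matrix.mul_apply]
      have hzero : (∑ U : Ix n k, ((((-K) * exp (s • (-K))) S U) * Gm J k s U T
            + exp (s • (-K)) S U * ((K * Gm J k s) U T))) = 0 := by
        rw [Finset.sum_add_distrib]
        have h1 : (∑ U : Ix n k, (((-K) * exp (s • (-K))) S U) * Gm J k s U T)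
            = (((-K) * exp (s • (-K))) * Gm J k s) S T := (Matrix.mul_apply).symm
        have h2 : (∑ U : Ix n k, exp (s • (-K)) S U * ((K * Gm J k s) U T))
            = (exp (s • (-K)) * (K * Gm J k s)) S T := (Matrix.mul_apply).symm
        rw [h1, h2]
        have : ((-K) * exp (s • (-K))) * Gm J k s
            + exp (s • (-K)) * (K * Gm J k s) = 0 := by
          rw [← Matrix.mul_assoc, hcomm s, neg_mul, neg_mul, neg_add_cancel]
        rw [← Matrix.add_apply, this, Matrix.zero_apply]
      rw [hfun]
      rw [hzero] at hsum
      exact hsum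
    intro s
    exact is_const_of_deriv_eq_zero
      (fun u => (hdiff u).differentiableAt) (fun u => (hdiff u).deriv) s 0
  have hone : ∀ s : ℝ, exp (s • (-K)) * Gm J k s = 1 := by
    intro s
    ext S T
    rw [key S T s, zero_smul, exp_zero, Gm_zero, Matrix.one_mul]
  have hinv : exp (t • K) * exp (t • (-K)) = 1 := by
    rw [← Matrix.exp_add_of_commute (t • K) (t • (-K))
      (((Commute.refl K).neg_right.smul_left t).smul_right t)]
    rw [smul_neg, add_neg_cancel, ← zero_smul ℝ (0 : Matrix (Ix n k) (Ix n k) ℝ)]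
    rw [zero_smul, exp_zero]
  calc Gm J k t = 1 * Gm J k t := (Matrix.one_mul _).symm
    _ = (exp (t • K) * exp (t • (-K))) * Gm J k t := by rw [hinv]
    _ = exp (t • K) * (exp (t • (-K)) * Gm J k t) := Matrix.mul_assoc _ _ _
    _ = exp (t • K) * 1 := by rw [hone t]
    _ = exp (t • K) := Matrix.mul_one _

theorem pow_entry_nonneg {ι : Type*} [Fintype ι] [DecidableEq ι] {B : Matrix ι ι ℝ}
    (hB : ∀ i j, 0 ≤ B i j) (m : ℕ) : ∀ i j, 0 ≤ (B ^ m) i j := by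
  induction m with
  | zero =>
      intro i j
      rw [pow_zero]
      rcases eq_or_ne i j with rfl | hij
      · simp [Matrix.one_apply_eq]
      · simp [Matrix.one_apply_ne hij]
  | succ m ih =>
      intro i j
      rw [pow_succ, Matrix.mul_apply]
      exact Finset.sum_nonneg fun u _ => mul_nonneg (ih i u) (hB u j)

theorem exp_entry_pos {ι : Type*} [Fintype ι] [DecidableEq ι] {B : Matrix ι ι ℝ}
    (hB : ∀ i j, 0 ≤ B i j) {t : ℝ} (ht : 0 < t) (i j : ι) (m : ℕ)
    (hm : 0 < (B ^ m) i j) : 0 < exp (t • B) i j := by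
  letI : NormedRing (Matrix ι ι ℝ) := Matrix.linftyOpNormedRing
  letI : NormedAlgebra ℝ (Matrix ι ι ℝ) := Matrix.linftyOpNormedAlgebra
  have hsum : Summable (fun m : ℕ => (m.factorial⁻¹ : ℝ) • (t • B) ^ m) :=
    NormedSpace.expSeries_summable' (𝕂 := ℝ) (t • B)
  let L : Matrix ι ι ℝ →ₗ[ℝ] ℝ :=
    { toFun := fun M => M i j
      map_add' := fun _ _ => rfl
      map_smul' := fun _ _ => rfl }
  let L' := LinearMap.toContinuousLinearMap L
  have hmap : exp (t • B) i j = ∑' m : ℕ, ((m.factorial⁻¹ : ℝ) • (t • B) ^ m) i j := by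
    rw [NormedSpace.exp_eq_tsum ℝ]
    exact L'.map_tsum hsum
  have hterm : ∀ m : ℕ, ((m.factorial⁻¹ : ℝ) • (t • B) ^ m) i j
      = (m.factorial⁻¹ : ℝ) * t ^ m * (B ^ m) i j := by
    intro m
    rw [smul_pow]
    simp [mul_assoc]
  have hsum' : Summable (fun m : ℕ => ((m.factorial⁻¹ : ℝ) • (t • B) ^ m) i j) :=
    hsum.map L' L'.continuous
  have hnonneg : ∀ m' : ℕ, 0 ≤ ((m'.factorial⁻¹ : ℝ) • (t • B) ^ m') i j := by
    intro m'
    rw [hterm]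
    have h1 : (0:ℝ) ≤ (m'.factorial⁻¹ : ℝ) := by positivity
    exact mul_nonneg (mul_nonneg h1 (le_of_lt (pow_pos ht m'))) (pow_entry_nonneg hB m' i j)
  have hle := Summable.le_tsum hsum' m (fun m' _ => hnonneg m')
  have hpos : 0 < ((m.factorial⁻¹ : ℝ) • (t • B) ^ m) i j := by
    rw [hterm]
    have h1 : (0:ℝ) < (m.factorial⁻¹ : ℝ) := by positivity
    exact mul_pos (mul_pos h1 (pow_pos ht m)) hm
  rw [hmap]
  exact lt_of_lt_of_le hpos hle

section Reach
variable {n k : ℕ} (J : Matrix (Fin n) (Fin n) ℝ)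

theorem J_offdiag_nonneg
    (htri : ∀ i j : Fin n, (i.val + 1 < j.val ∨ j.val + 1 < i.val) → J i j = 0)
    (hsup : ∀ i j : Fin n, i.val + 1 = j.val → 0 < J i j)
    (hsub : ∀ i j : Fin n, j.val + 1 = i.val → 0 < J i j)
    (a b : Fin n) (hab : a ≠ b) : 0 ≤ J a b := by
  have hv : a.val ≠ b.val := fun hc => hab (Fin.ext hc)
  rcases lt_trichotomy (a.val + 1) b.val with h | h | h
  · rw [htri a b (Or.inl h)]
  · exact le_of_lt (hsup a b h)
  · rcases lt_trichotomy (b.val + 1) a.val with h' | h' | h'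
    · rw [htri a b (Or.inr h')]
    · exact le_of_lt (hsub a b h')
    · omega

theorem Jc_offdiag_nonneg
    (htri : ∀ i j : Fin n, (i.val + 1 < j.val ∨ j.val + 1 < i.val) → J i j = 0)
    (hsup : ∀ i j : Fin n, i.val + 1 = j.val → 0 < J i j)
    (hsub : ∀ i j : Fin n, j.val + 1 = i.val → 0 < J i j)
    (S T : Ix n k) (hST : S ≠ T) : 0 ≤ Jc J k S T := by
  rw [Jc, Matrix.of_apply]
  apply Finset.sum_nonneg
  intro i _
  apply Finset.sum_nonneg
  intro l _
  by_cases hcond : (l = enum S i ∨ l ∉ S.1) ∧ T.1 = moveSet S i l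
  · rw [if_pos hcond]
    rcases hcond.1 with h | h
    · exfalso
      apply hST
      apply Subtype.ext
      have : moveSet S i l = S.1 := by
        rw [h, moveSet, Finset.insert_erase (enum_mem S i)]
      -- T.1 = moveSet = S.1, so S = T
      rw [← hcond.2] at this
      exact this.symm
    · exact J_offdiag_nonneg J htri hsup hsub _ _
        (show enum S i ≠ l from fun hc => h (hc ▸ enum_mem S i))
  · rw [if_neg hcond]

theorem Jc_edge_pos
    (htri : ∀ i j : Fin n, (i.val + 1 < j.val ∨ j.val + 1 < i.val) → J i j = 0)
    (hsup : ∀ i j : Fin n, i.val + 1 = j.val → 0 < J i j)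
    (hsub : ∀ i j : Fin n, j.val + 1 = i.val → 0 < J i j)
    (S : Ix n k) (i : Fin k) (l : Fin n) (hl : l ∉ S.1)
    (hadj : l.val = (enum S i).val + 1 ∨ (enum S i).val = l.val + 1) :
    0 < Jc J k S (move S i l (Or.inr hl)) := by
  have hST : S ≠ move S i l (Or.inr hl) := by
    intro hc
    have : l ∈ S.1 := by
      conv_lhs => rw [hc]
      exact Finset.mem_insert_self _ _
    exact hl this
  rw [Jc, Matrix.of_apply]
  have hnn : ∀ i' : Fin k, ∀ l' : Fin n, 0 ≤
      (if (l' = enum S i' ∨ l' ∉ S.1) ∧ (move S i l (Or.inr hl)).1 = moveSet S i' l'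
        then J (enum S i') l' else 0) := by
    intro i' l'
    by_cases hcond : (l' = enum S i' ∨ l' ∉ S.1) ∧ (move S i l (Or.inr hl)).1 = moveSet S i' l'
    · rw [if_pos hcond]
      rcases hcond.1 with h | h
      · exfalso
        apply hST
        apply Subtype.ext
        have : moveSet S i' l' = S.1 := by
          rw [h, moveSet, Finset.insert_erase (enum_mem S i')]
        rw [hcond.2, this]
      · exact J_offdiag_nonneg J htri hsup hsub _ _
          (show enum S i' ≠ l' from fun hc => h (hc ▸ enum_mem S i'))
    · rw [if_neg hcond]
  apply Finset.sum_pos'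
  · intro i' _
    exact Finset.sum_nonneg fun l' _ => hnn i' l'
  · refine ⟨i, Finset.mem_univ i, ?_⟩
    apply Finset.sum_pos'
    · intro l' _
      exact hnn i l'
    · refine ⟨l, Finset.mem_univ l, ?_⟩
      rw [if_pos ⟨Or.inr hl, rfl⟩]
      rcases hadj with h | h
      · exact hsup _ _ h.symm
      · exact hsub _ _ h.symm
end Reach

section Reach2
variable {n k : ℕ} (J : Matrix (Fin n) (Fin n) ℝ)

/-- shifted compound matrix: entrywise nonnegative. -/
noncomputable def Bmat (k : ℕ) : Matrix (Ix n k) (Ix n k) ℝ :=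
  Jc J k + (1 + ∑ U : Ix n k, |Jc J k U U|) • (1 : Matrix (Ix n k) (Ix n k) ℝ)

theorem Bmat_nonneg
    (htri : ∀ i j : Fin n, (i.val + 1 < j.val ∨ j.val + 1 < i.val) → J i j = 0)
    (hsup : ∀ i j : Fin n, i.val + 1 = j.val → 0 < J i j)
    (hsub : ∀ i j : Fin n, j.val + 1 = i.val → 0 < J i j) :
    ∀ S T : Ix n k, 0 ≤ Bmat J k S T := by
  intro S T
  rw [Bmat, Matrix.add_apply, Matrix.smul_apply]
  rcases eq_or_ne S T with rfl | hST
  · rw [Matrix.one_apply_eq, smul_eq_mul, mul_one]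
    have h1 : |Jc J k S S| ≤ ∑ U : Ix n k, |Jc J k U U| :=
      Finset.single_le_sum (f := fun U => |Jc J k U U|) (fun U _ => abs_nonneg _)
        (Finset.mem_univ S)
    have h2 : -(Jc J k S S) ≤ |Jc J k S S| := neg_le_abs _
    linarith
  · rw [Matrix.one_apply_ne hST, smul_zero, add_zero]
    exact Jc_offdiag_nonneg J htri hsup hsub S T hST

theorem Bmat_edge_pos
    (htri : ∀ i j : Fin n, (i.val + 1 < j.val ∨ j.val + 1 < i.val) → J i j = 0)
    (hsup : ∀ i j : Fin n, i.val + 1 = j.val → 0 < J i j)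
    (hsub : ∀ i j : Fin n, j.val + 1 = i.val → 0 < J i j)
    (S : Ix n k) (i : Fin k) (l : Fin n) (hl : l ∉ S.1)
    (hadj : l.val = (enum S i).val + 1 ∨ (enum S i).val = l.val + 1) :
    0 < Bmat J k S (move S i l (Or.inr hl)) := by
  have hST : S ≠ move S i l (Or.inr hl) := by
    intro hc
    apply hl
    have : l ∈ (move S i l (Or.inr hl)).1 := Finset.mem_insert_self _ _
    rw [← hc] at this
    exact this
  rw [Bmat, Matrix.add_apply, Matrix.smul_apply, Matrix.one_apply_ne hST, smul_zero, add_zero]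
  exact Jc_edge_pos J htri hsup hsub S i l hl hadj

/-- reverse edge -/
theorem Bmat_edge_pos' 
    (htri : ∀ i j : Fin n, (i.val + 1 < j.val ∨ j.val + 1 < i.val) → J i j = 0)
    (hsup : ∀ i j : Fin n, i.val + 1 = j.val → 0 < J i j)
    (hsub : ∀ i j : Fin n, j.val + 1 = i.val → 0 < J i j)
    (S : Ix n k) (i : Fin k) (l : Fin n) (hl : l ∉ S.1)
    (hadj : l.val = (enum S i).val + 1 ∨ (enum S i).val = l.val + 1) :
    0 < Bmat J k (move S i l (Or.inr hl)) S := by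
  set S' := move S i l (Or.inr hl) with hS'
  set x := enum S i with hx
  have hxS' : x ∉ S'.1 := by
    have h1 : x ≠ l := fun hc => hl (hc ▸ enum_mem S i)
    have h2 : x ∉ S.1.erase x := Finset.notMem_erase _ _
    intro hc
    rcases Finset.mem_insert.1 hc with h | h
    · exact h1 h
    · exact h2 h
  obtain ⟨i', hi'⟩ : ∃ i', enum S' i' = l := by
    have : l ∈ Set.range (enum S') := by
      rw [enum, Finset.range_orderEmbOfFin]
      exact Finset.mem_insert_self _ _
    exact this
  have hadj' : x.val = (enum S' i').val + 1 ∨ (enum S' i').val = x.val + 1 := by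
    rw [hi']
    rcases hadj with h | h
    · right; omega
    · left; omega
  have hmv : move S' i' x (Or.inr hxS') = S := by
    apply Subtype.ext
    show insert x (S'.1.erase (enum S' i')) = S.1
    rw [hi']
    show insert x ((insert l (S.1.erase x)).erase l) = S.1
    rw [Finset.erase_insert (fun hc => hl (Finset.mem_of_mem_erase hc))]
    exact Finset.insert_erase (enum_mem S i)
  have := Bmat_edge_pos J htri hsup hsub S' i' x hxS' hadj'
  rw [hmv] at this
  exact this

end Reach2

section Reach3
variable {n k : ℕ}

def Reach (B : Matrix (Ix n k) (Ix n k) ℝ) (S T : Ix n k) : Prop :=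
  ∃ m : ℕ, 0 < (B ^ m) S T

theorem Reach.refl (B : Matrix (Ix n k) (Ix n k) ℝ) (S : Ix n k) : Reach B S S :=
  ⟨0, by rw [pow_zero, Matrix.one_apply_eq]; norm_num⟩

theorem Reach.head {B : Matrix (Ix n k) (Ix n k) ℝ} (hB : ∀ S T, 0 ≤ B S T)
    {S U T : Ix n k} (h1 : 0 < B S U) (h2 : Reach B U T) : Reach B S T := by
  obtain ⟨m, hm⟩ := h2
  refine ⟨m + 1, ?_⟩
  rw [pow_succ']
  rw [Matrix.mul_apply]
  apply Finset.sum_pos'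
  · intro V _
    exact mul_nonneg (hB S V) (pow_entry_nonneg hB m V T)
  · exact ⟨U, Finset.mem_univ U, mul_pos h1 hm⟩

theorem Reach.tail {B : Matrix (Ix n k) (Ix n k) ℝ} (hB : ∀ S T, 0 ≤ B S T)
    {S U T : Ix n k} (h1 : Reach B S U) (h2 : 0 < B U T) : Reach B S T := by
  obtain ⟨m, hm⟩ := h1
  refine ⟨m + 1, ?_⟩
  rw [pow_succ]
  rw [Matrix.mul_apply]
  apply Finset.sum_pos'
  · intro V _
    exact mul_nonneg (pow_entry_nonneg hB m S V) (hB V T)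
  · exact ⟨U, Finset.mem_univ U, mul_pos hm h2⟩

/-- weight of an index set -/
def weight (S : Ix n k) : ℕ := ∑ x ∈ S.1, x.val

theorem canon_unique (S T : Ix n k) (hS : ∀ i, (enum S i).val = i.val)
    (hT : ∀ i, (enum T i).val = i.val) : S = T := by
  have hmem : ∀ (U : Ix n k), (∀ i, (enum U i).val = i.val) →
      ∀ x : Fin n, (x ∈ U.1 ↔ x.val < k) := by
    intro U hU x
    constructor
    · intro hx
      obtain ⟨i, hi⟩ : ∃ i, enum U i = x := by
        have : x ∈ Set.range (enum U) := by
          rw [enum, Finset.range_orderEmbOfFin]; exact hx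
        exact this
      rw [← hi, hU i]
      exact i.isLt
    · intro hx
      have := hU ⟨x.val, hx⟩
      have heq : enum U ⟨x.val, hx⟩ = x := Fin.ext this
      rw [← heq]
      exact enum_mem U _
  apply Subtype.ext
  ext x
  rw [hmem S hS x, hmem T hT x]

theorem descent (S : Ix n k) (hne : ∃ i, (enum S i).val ≠ i.val) :
    ∃ (i : Fin k) (l : Fin n), l ∉ S.1 ∧ l.val + 1 = (enum S i).val := by
  classical
  set F := Finset.univ.filter (fun i : Fin k => i.val < (enum S i).val) with hF
  have hFne : F.Nonempty := by
    obtain ⟨i, hi⟩ := hne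
    have hle := strictMono_val_le (enum_strictMono S) i
    exact ⟨i, Finset.mem_filter.2 ⟨Finset.mem_univ i, by omega⟩⟩
  set i₀ := F.min' hFne with hi₀
  have hi₀F : i₀ ∈ F := F.min'_mem hFne
  have hi₀lt : i₀.val < (enum S i₀).val := (Finset.mem_filter.1 hi₀F).2
  have hpos : 0 < (enum S i₀).val := lt_of_le_of_lt (Nat.zero_le _) hi₀lt
  refine ⟨i₀, ⟨(enum S i₀).val - 1, lt_trans (by omega) (enum S i₀).isLt⟩, ?_, by simp; omega⟩
  intro hmem
  obtain ⟨j, hj⟩ := mem_range_enum S _ hmem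
  have hjval : (enum S j).val = (enum S i₀).val - 1 := by rw [hj]
  have hjlt : j < i₀ := by
    have : enum S j < enum S i₀ := by
      rw [Fin.lt_def, hjval]; omega
    exact ((enum_strictMono S).lt_iff_lt).1 this
  have hjF : j ∉ F := fun hc => absurd (F.min'_le j hc) (not_le.2 hjlt)
  have hjeq : (enum S j).val = j.val := by
    have hle := strictMono_val_le (enum_strictMono S) j
    have : ¬ (j.val < (enum S j).val) := by
      intro hc
      exact hjF (Finset.mem_filter.2 ⟨Finset.mem_univ j, hc⟩)
    omega
  have : j.val < i₀.val := hjlt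
  omega

theorem weight_move_lt (S : Ix n k) (i : Fin k) (l : Fin n) (hl : l ∉ S.1)
    (hadj : l.val + 1 = (enum S i).val) :
    weight (move S i l (Or.inr hl)) < weight S := by
  have h1 : (move S i l (Or.inr hl)).1 = insert l (S.1.erase (enum S i)) := rfl
  have hlne : l ∉ S.1.erase (enum S i) := fun hc => hl (Finset.mem_of_mem_erase hc)
  have h2 : weight (move S i l (Or.inr hl))
      = l.val + ∑ x ∈ S.1.erase (enum S i), x.val := by
    rw [weight, h1, Finset.sum_insert hlne]
  have h3 : (∑ x ∈ S.1.erase (enum S i), x.val) + (enum S i).val = weight S := by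
    rw [weight]
    exact Finset.sum_erase_add _ _ (enum_mem S i)
  omega

theorem reach_all (J : Matrix (Fin n) (Fin n) ℝ)
    (htri : ∀ i j : Fin n, (i.val + 1 < j.val ∨ j.val + 1 < i.val) → J i j = 0)
    (hsup : ∀ i j : Fin n, i.val + 1 = j.val → 0 < J i j)
    (hsub : ∀ i j : Fin n, j.val + 1 = i.val → 0 < J i j)
    (S T : Ix n k) : Reach (Bmat J k) S T := by
  have hB := Bmat_nonneg J htri hsup hsub (k := k)
  obtain ⟨w, hw⟩ : ∃ w, weight S + weight T = w := ⟨_, rfl⟩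
  induction w using Nat.strong_induction_on generalizing S T with
  | _ w ih =>
    rcases eq_or_ne S T with rfl | hST
    · exact Reach.refl _ S
    · by_cases hScanon : ∀ i, (enum S i).val = i.val
      · by_cases hTcanon : ∀ i, (enum T i).val = i.val
        · exact absurd (canon_unique S T hScanon hTcanon) hST
        · -- descend T
          push_neg at hTcanon
          obtain ⟨i, l, hl, hadj⟩ := descent T hTcanon
          have hlt := weight_move_lt T i l hl hadj
          have hreach : Reach (Bmat J k) S (move T i l (Or.inr hl)) :=
            ih (weight S + weight (move T i l (Or.inr hl))) (by omega) _ _ rfl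
          have hedge := Bmat_edge_pos' J htri hsup hsub T i l hl (Or.inr hadj.symm)
          exact Reach.tail hB hreach hedge
      · -- descend S
        push_neg at hScanon
        obtain ⟨i, l, hl, hadj⟩ := descent S hScanon
        have hlt := weight_move_lt S i l hl hadj
        have hreach : Reach (Bmat J k) (move S i l (Or.inr hl)) T :=
          ih (weight (move S i l (Or.inr hl)) + weight T) (by omega) _ _ rfl
        have hedge := Bmat_edge_pos J htri hsup hsub S i l hl (Or.inr hadj.symm)
        exact Reach.head hB hedge hreach

end Reach3

theorem exp_smul_one {ι : Type*} [Fintype ι] [DecidableEq ι] (s : ℝ) :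
    exp (s • (1 : Matrix ι ι ℝ)) = Real.exp s • (1 : Matrix ι ι ℝ) := by
  letI : NormedRing (Matrix ι ι ℝ) := Matrix.linftyOpNormedRing
  letI : NormedAlgebra ℝ (Matrix ι ι ℝ) := Matrix.linftyOpNormedAlgebra
  have h1 : s • (1 : Matrix ι ι ℝ) = algebraMap ℝ (Matrix ι ι ℝ) s :=
    (Algebra.algebraMap_eq_smul_one s).symm
  rw [h1]
  erw [← NormedSpace.algebraMap_exp_comm]
  rw [Algebra.algebraMap_eq_smul_one,
    Real.exp_eq_exp_ℝ]

/-- `exp (t • J)` is totally positive for `t > 0`: all its minors with sorted row and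
column indices are positive. -/
theorem exp_minor_pos {n : ℕ} (J : Matrix (Fin n) (Fin n) ℝ)
    (htri : ∀ i j : Fin n, (i.val + 1 < j.val ∨ j.val + 1 < i.val) → J i j = 0)
    (hsup : ∀ i j : Fin n, i.val + 1 = j.val → 0 < J i j)
    (hsub : ∀ i j : Fin n, j.val + 1 = i.val → 0 < J i j)
    {t : ℝ} (ht : 0 < t) {k : ℕ} (r c : Fin k → Fin n)
    (hr : StrictMono r) (hc : StrictMono c) :
    0 < ((exp (t • J)).submatrix r c).det := by
  -- the row/column index sets
  have hcardr : (Finset.univ.image r).card = k := by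
    rw [Finset.card_image_of_injective _ hr.injective, Finset.card_univ, Fintype.card_fin]
  have hcardc : (Finset.univ.image c).card = k := by
    rw [Finset.card_image_of_injective _ hc.injective, Finset.card_univ, Fintype.card_fin]
  set S : Ix n k := ⟨Finset.univ.image r, hcardr⟩ with hS
  set T : Ix n k := ⟨Finset.univ.image c, hcardc⟩ with hT
  have hrS : r = enum S :=
    Finset.orderEmbOfFin_unique hcardr (fun i => Finset.mem_image_of_mem r (Finset.mem_univ i)) hr
  have hcT : c = enum T :=
    Finset.orderEmbOfFin_unique hcardc (fun i => Finset.mem_image_of_mem c (Finset.mem_univ i)) hc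
  have hdet : ((exp (t • J)).submatrix r c).det = Gm J k t S T := by
    rw [hrS, hcT]; rfl
  rw [hdet, Gm_eq_exp J htri k t]
  -- split off the scalar shift
  set c0 : ℝ := 1 + ∑ U : Ix n k, |Jc J k U U| with hc0
  have hsplit : t • Jc J k = (-(t*c0)) • (1 : Matrix (Ix n k) (Ix n k) ℝ) + t • Bmat J k := by
    rw [Bmat, ← hc0]
    module
  rw [hsplit, Matrix.exp_add_of_commute _ _ (((Commute.one_left (t • Bmat J k)).smul_left _))]
  rw [exp_smul_one]
  rw [Matrix.smul_mul, Matrix.smul_apply, smul_eq_mul]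
  apply mul_pos (Real.exp_pos _)
  rw [Matrix.one_mul]
  obtain ⟨m, hm⟩ := reach_all J htri hsup hsub S T
  exact exp_entry_pos (Bmat_nonneg J htri hsup hsub) ht S T m hm

theorem exp_tridiagonal_oscillatory {n : ℕ} (J : Matrix (Fin n) (Fin n) ℝ)
    (htri : ∀ i j : Fin n, (i.val + 1 < j.val ∨ j.val + 1 < i.val) → J i j = 0)
    (hsup : ∀ i j : Fin n, i.val + 1 = j.val → 0 < J i j)
    (hsub : ∀ i j : Fin n, j.val + 1 = i.val → 0 < J i j) :
    ∃ εbar : ℝ, 0 < εbar ∧ ∀ ε : ℝ, 0 < ε → ε < εbar →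
      IsUnit (NormedSpace.exp (ε • J)).det ∧
      TotallyNonneg (NormedSpace.exp (ε • J)) ∧
      MatIrreducible (NormedSpace.exp (ε • J)) ∧
      TotallyPos ((NormedSpace.exp (ε • J)) ^ (n - 1)) := by
  refine ⟨1, one_pos, fun ε hε _ => ?_⟩
  have hTP : TotallyPos (exp (ε • J)) :=
    fun k r c hr hc => exp_minor_pos J htri hsup hsub hε r c hr hc
  refine ⟨(Matrix.isUnit_iff_isUnit_det _).mp (Matrix.isUnit_exp _),
    fun k r c hr hc => le_of_lt (hTP k r c hr hc), ?_, ?_⟩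
  · -- irreducibility
    intro Sset hne hneq
    obtain ⟨i, hi⟩ := hne
    obtain ⟨j, hj⟩ : ∃ j, j ∉ Sset := by
      by_contra hcon
      push_neg at hcon
      exact hneq (Set.eq_univ_iff_forall.2 hcon)
    refine ⟨i, hi, j, hj, ?_⟩
    have hmono1 : ∀ f : Fin 1 → Fin n, StrictMono f :=
      fun f a b h => absurd (Subsingleton.elim a b) (ne_of_lt h)
    have h1 := hTP 1 (fun _ => i) (fun _ => j) (hmono1 _) (hmono1 _)
    have h2 : ((exp (ε • J)).submatrix (fun _ : Fin 1 => i) (fun _ => j)).det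
        = exp (ε • J) i j := by
      rw [Matrix.det_fin_one]
      rfl
    rw [h2] at h1
    exact ne_of_gt h1
  · -- total positivity of the (n-1)-st power
    rcases Nat.eq_zero_or_pos (n - 1) with h0 | hpos
    · -- n ≤ 1 : the power is the identity matrix
      rw [h0, pow_zero]
      intro k r c hr hc
      match k, r, c with
      | 0, r, c => simp [Matrix.det_isEmpty]
      | (k+1), r, c =>
        have hn0 : n ≠ 0 := fun hc0 => (hc0 ▸ (r 0)).elim0
        have hn1 : n = 1 := by omega
        have hk : k + 1 ≤ n := by
          have := Fintype.card_le_of_injective r hr.injective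
          simpa using this
        have hk0 : k = 0 := by omega
        subst hk0
        subst hn1
        have hrc : r = c := funext fun a => Subsingleton.elim _ _
        rw [hrc]
        have : ((1 : Matrix (Fin 1) (Fin 1) ℝ).submatrix c c).det
            = (1 : Matrix (Fin 1) (Fin 1) ℝ) (c 0) (c 0) := Matrix.det_fin_one _
        rw [this, Matrix.one_apply_eq]
        norm_num
    · -- n ≥ 2
      have hpow : (exp (ε • J)) ^ (n - 1) = exp ((((n-1 : ℕ) : ℝ) * ε) • J) := by
        rw [← Matrix.exp_nsmul (n-1) (ε • J)]
        congr 1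
        rw [← Nat.cast_smul_eq_nsmul ℝ (n-1) (ε • J), smul_smul]
      rw [hpow]
      intro k r c hr hc
      exact exp_minor_pos J htri hsup hsub
        (mul_pos (by exact_mod_cast Nat.cast_pos.2 hpos) hε) r c hr hc
end
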